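/- arXiv:2603.01162 — 6 statements merged into one kernel-verified Lean document; each statement's English description precedes it below -/
import Mathlib

section
/- Let G ≥ 2 be a natural number, let W : Fin G → ℝ^d be vectors and Z : Fin G → ℝ be real numbers. Then the group-relative (leave-one-out baseline) average equals a second-order U-statistic with symmetric kernel: (1/G) ∑_{g} (Z_g − (1/(G−1)) ∑_{k ≠ g} Z_k) • W_g = (1/(G(G−1))) ∑_{1 ≤ i < j ≤ G} (Z_i − Z_j) • (W_i − W_j). -/
open Finset

/-- The group-relative (leave-one-out baseline) average equals a second-order
U-statistic with symmetric kernel (Lemma 1 of the paper). -/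
theorem grpo_gradient_is_U_statistic (G d : ℕ) (hG : 2 ≤ G)
    (W : Fin G → EuclideanSpace ℝ (Fin d)) (Z : Fin G → ℝ) :
    (G : ℝ)⁻¹ • ∑ g : Fin G,
        (Z g - ((G : ℝ) - 1)⁻¹ * ∑ k ∈ univ.erase g, Z k) • W g =
      ((G : ℝ) * ((G : ℝ) - 1))⁻¹ •
        ∑ p ∈ univ.filter (fun p : Fin G × Fin G => p.1 < p.2),
          (Z p.1 - Z p.2) • (W p.1 - W p.2) := by
  have hG1 : ((G : ℝ) - 1) ≠ 0 := by
    have : (2 : ℝ) ≤ (G : ℝ) := by exact_mod_cast hG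
    nlinarith
  set f : Fin G → Fin G → EuclideanSpace ℝ (Fin d) := fun i j => (Z i - Z j) • W i with hf
  have hcard : ∀ g : Fin G, ((univ.erase g).card : ℝ) = (G : ℝ) - 1 := by
    intro g
    rw [Finset.card_erase_of_mem (mem_univ g), Finset.card_univ, Fintype.card_fin]
    have h1 : 1 ≤ G := le_trans (by norm_num) hG
    push_cast [Nat.cast_sub h1]
    ring
  have key : ∀ g : Fin G,
      (Z g - ((G : ℝ) - 1)⁻¹ * ∑ k ∈ univ.erase g, Z k)
        = ((G : ℝ) - 1)⁻¹ * ∑ k ∈ univ.erase g, (Z g - Z k) := by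
    intro g
    rw [Finset.sum_sub_distrib, Finset.sum_const, nsmul_eq_mul, hcard g]
    field_simp
  -- LHS as double sum
  have hLHS : (G : ℝ)⁻¹ • ∑ g : Fin G,
      (Z g - ((G : ℝ) - 1)⁻¹ * ∑ k ∈ univ.erase g, Z k) • W g
      = ((G : ℝ) * ((G : ℝ) - 1))⁻¹ • ∑ g : Fin G, ∑ k ∈ univ.erase g, f g k := by
    have step : ∀ g : Fin G,
        (Z g - ((G : ℝ) - 1)⁻¹ * ∑ k ∈ univ.erase g, Z k) • W g
          = ((G : ℝ) - 1)⁻¹ • ∑ k ∈ univ.erase g, f g k := by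
      intro g
      rw [key g, mul_smul, Finset.sum_smul]
    simp only [step]
    rw [← Finset.smul_sum, smul_smul, ← mul_inv]
  rw [hLHS]
  congr 1
  -- now identify the double sum with the filtered sum
  have hD : ∑ g : Fin G, ∑ k ∈ univ.erase g, f g k
      = ∑ p ∈ univ.filter (fun p : Fin G × Fin G => p.1 ≠ p.2), f p.1 p.2 := by
    rw [Finset.sum_filter, Fintype.sum_prod_type]
    refine Finset.sum_congr rfl fun g _ => ?_
    rw [← Finset.sum_filter]
    congr 1
    ext k
    simp [ne_comm, eq_comm]
  have hsplit : univ.filter (fun p : Fin G × Fin G => p.1 ≠ p.2)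
      = univ.filter (fun p : Fin G × Fin G => p.1 < p.2)
        ∪ univ.filter (fun p : Fin G × Fin G => p.2 < p.1) := by
    ext p
    simp only [mem_filter, mem_union, mem_univ, true_and]
    constructor
    · exact fun h => lt_or_gt_of_ne h
    · rintro (h | h)
      · exact ne_of_lt h
      · exact (ne_of_lt h).symm
  have hdisj : Disjoint (univ.filter (fun p : Fin G × Fin G => p.1 < p.2))
      (univ.filter (fun p : Fin G × Fin G => p.2 < p.1)) := by
    rw [Finset.disjoint_filter]
    exact fun p _ h => not_lt_of_gt h
  have hswap : ∑ p ∈ univ.filter (fun p : Fin G × Fin G => p.2 < p.1), f p.1 p.2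
      = ∑ p ∈ univ.filter (fun p : Fin G × Fin G => p.1 < p.2), f p.2 p.1 := by
    refine Finset.sum_nbij' (fun p => (p.2, p.1)) (fun p => (p.2, p.1)) ?_ ?_ ?_ ?_ ?_
    · intro p hp; simp only [mem_filter, mem_univ, true_and] at hp ⊢; exact hp
    · intro p hp; simp only [mem_filter, mem_univ, true_and] at hp ⊢; exact hp
    · intro p _; rfl
    · intro p _; rfl
    · intro p _; rfl
  rw [hD, hsplit, Finset.sum_union hdisj, hswap, ← Finset.sum_add_distrib]
  refine Finset.sum_congr rfl fun p _ => ?_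
  simp only [hf]
  rw [smul_sub, ← neg_sub (Z p.1) (Z p.2), neg_smul]
  abel
end

section
/- For any n ≥ 2, the mean squared error of the second-order U-statistic U = (2/(n(n−1))) ∑_{1 ≤ i < j ≤ n} h(X_i, X_j) about its mean satisfies the two-sided bound (1/n) E‖ζ₁(X₁)‖² ≤ E‖U − h₀‖² ≤ (1/n) E‖ζ₁(X₁)‖² + 32 · E‖h(X₁, X₂)‖² / (n(n−1)); in particular the first-order term (1/n) E‖ζ₁(X₁)‖² is the leading term of the MSE, and the remainder is O(E‖h‖²/n²). -/
set_option maxHeartbeats 2000000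
open MeasureTheory ProbabilityTheory Finset

-- combinatorial lemmas

private lemma card_upper (n : ℕ) :
    2 * ((univ : Finset (Fin n × Fin n)).filter fun p => p.1 < p.2).card = n * n - n := by
  classical
  have hswap : ((univ : Finset (Fin n × Fin n)).filter fun p => p.1 < p.2).card
      = ((univ : Finset (Fin n × Fin n)).filter fun p => p.2 < p.1).card := by
    apply Finset.card_nbij (fun p => p.swap)
    · intro p hp; simp_all
    · intro p hp q hq hpq
      simp only [Prod.ext_iff, Prod.swap] at hpq ⊢
      exact ⟨hpq.2, hpq.1⟩
    · intro q hq
      refine ⟨q.swap, by simp_all, by simp⟩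
  have hunion : ((univ : Finset (Fin n × Fin n)).filter fun p => p.1 < p.2)
      ∪ ((univ : Finset (Fin n × Fin n)).filter fun p => p.2 < p.1)
      = (univ : Finset (Fin n)).offDiag := by
    ext p
    simp only [mem_union, mem_filter, mem_univ, true_and, Finset.mem_offDiag]
    constructor
    · rintro (h | h) <;> first | exact h.ne | exact h.ne'
    · intro h
      rcases lt_or_gt_of_ne h with h | h <;> simp [h]
  have hdisj : Disjoint ((univ : Finset (Fin n × Fin n)).filter fun p => p.1 < p.2)
      ((univ : Finset (Fin n × Fin n)).filter fun p => p.2 < p.1) := by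
    simp only [Finset.disjoint_left, mem_filter]
    rintro p ⟨-, h1⟩ ⟨-, h2⟩
    exact absurd (h1.trans h2) (lt_irrefl _)
  have := Finset.card_union_of_disjoint hdisj
  rw [hunion] at this
  rw [Finset.offDiag_card, Finset.card_univ, Fintype.card_fin] at this
  omega

private lemma count_touch {n : ℕ} (i j : Fin n) (hij : i ≠ j) :
    ((univ : Finset (Fin n × Fin n)).filter
      fun q => q.1 < q.2 ∧ (q.1 = i ∨ q.2 = i) ∧ q.1 ≠ j ∧ q.2 ≠ j).card = n - 2 := by
  classical
  have hcard : ((univ : Finset (Fin n)) \ {i, j}).card = n - 2 := by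
    rw [Finset.card_sdiff_of_subset (by simp)]
    rw [Finset.card_univ, Fintype.card_fin, Finset.card_insert_of_notMem (by simpa using hij),
      Finset.card_singleton]
  rw [← hcard]
  apply Finset.card_nbij' (fun q => if q.1 = i then q.2 else q.1)
    (fun x => if x < i then (x, i) else (i, x))
  · intro q hq
    simp only [Finset.mem_coe, mem_filter, mem_univ, true_and, Finset.mem_sdiff, Finset.mem_insert,
      Finset.mem_singleton, not_or] at hq ⊢
    split_ifs <;> fin_omega
  · intro x hx
    simp only [Finset.mem_coe, mem_filter, mem_univ, true_and, Finset.mem_sdiff, Finset.mem_insert,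
      Finset.mem_singleton, not_or] at hx ⊢
    split_ifs <;> simp_all <;> fin_omega
  · intro q hq
    simp only [Finset.mem_coe, mem_filter, mem_univ, true_and] at hq
    simp only [Prod.ext_iff]
    split_ifs <;> simp_all <;> fin_omega
  · intro x hx
    simp only [Finset.mem_coe, Finset.mem_sdiff, Finset.mem_univ, true_and, Finset.mem_insert,
      Finset.mem_singleton, not_or] at hx
    dsimp only
    split_ifs <;> simp_all <;> fin_omega

private lemma share_card {n : ℕ} (i j : Fin n) (hij : i < j) :
    (((univ : Finset (Fin n × Fin n)).filter fun q => q.1 < q.2).filter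
      fun q => q ≠ (i, j) ∧ (i = q.1 ∨ i = q.2 ∨ j = q.1 ∨ j = q.2)).card = 2 * (n - 2) := by
  classical
  have hunion : (((univ : Finset (Fin n × Fin n)).filter fun q => q.1 < q.2).filter
      fun q => q ≠ (i, j) ∧ (i = q.1 ∨ i = q.2 ∨ j = q.1 ∨ j = q.2))
      = ((univ : Finset (Fin n × Fin n)).filter
          fun q => q.1 < q.2 ∧ (q.1 = i ∨ q.2 = i) ∧ q.1 ≠ j ∧ q.2 ≠ j)
        ∪ ((univ : Finset (Fin n × Fin n)).filter
          fun q => q.1 < q.2 ∧ (q.1 = j ∨ q.2 = j) ∧ q.1 ≠ i ∧ q.2 ≠ i) := by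
    ext q
    simp only [mem_filter, mem_union, mem_univ, true_and, Prod.ext_iff, Ne, not_and]
    constructor
    · rintro ⟨h1, h2, h3⟩; fin_omega
    · rintro (⟨h1, h2, h3⟩ | ⟨h1, h2, h3⟩) <;> fin_omega
  have hdisj : Disjoint ((univ : Finset (Fin n × Fin n)).filter
          fun q => q.1 < q.2 ∧ (q.1 = i ∨ q.2 = i) ∧ q.1 ≠ j ∧ q.2 ≠ j)
        ((univ : Finset (Fin n × Fin n)).filter
          fun q => q.1 < q.2 ∧ (q.1 = j ∨ q.2 = j) ∧ q.1 ≠ i ∧ q.2 ≠ i) := by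
    simp only [Finset.disjoint_left, mem_filter, mem_univ, true_and]
    rintro q ⟨-, h1, h2, h3⟩ ⟨-, h4, -, -⟩
    fin_omega
  rw [hunion, Finset.card_union_of_disjoint hdisj, count_touch i j hij.ne,
    count_touch j i hij.ne']
  ring

local notation "⟪" x ", " y "⟫" => @inner ℝ _ _ x y

private lemma sq_int_le {α : Type*} [MeasurableSpace α] (μ : Measure α) [IsProbabilityMeasure μ]
    {f : α → ℝ} (h1 : Integrable f μ) (h2 : Integrable (fun x => f x ^ 2) μ) :
    (∫ x, f x ∂μ) ^ 2 ≤ ∫ x, f x ^ 2 ∂μ := by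
  set c := ∫ x, f x ∂μ with hc
  have h0 : 0 ≤ ∫ x, (f x - c) ^ 2 ∂μ := integral_nonneg fun x => sq_nonneg _
  have hexp : ∀ x, (f x - c) ^ 2 = f x ^ 2 - (2 * c) * f x + c ^ 2 := by intro x; ring
  rw [integral_congr_ae (Filter.Eventually.of_forall hexp)] at h0
  have e1 : Integrable (fun a => f a ^ 2 - 2 * c * f a) μ := h2.sub (h1.const_mul (2 * c))
  have e2 : Integrable (fun a => 2 * c * f a) μ := h1.const_mul (2 * c)
  rw [integral_add e1 (integrable_const _), integral_sub h2 e2, MeasureTheory.integral_const_mul,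
    integral_const] at h0
  simp only [probReal_univ, measure_univ, ENNReal.toReal_one, one_smul, ← hc] at h0
  nlinarith [h0]

private lemma abs_real_inner_le_half {E : Type*} [NormedAddCommGroup E] [InnerProductSpace ℝ E]
    (a b : E) : ‖(⟪a, b⟫ : ℝ)‖ ≤ (1 / 2) * ‖a‖ ^ 2 + (1 / 2) * ‖b‖ ^ 2 := by
  have := abs_real_inner_le_norm a b
  rw [Real.norm_eq_abs]
  nlinarith [norm_nonneg a, norm_nonneg b, sq_nonneg (‖a‖ - ‖b‖)]

private lemma integrable_comp' {α β G : Type*} [MeasurableSpace α] [MeasurableSpace β]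
    [NormedAddCommGroup G]
    {κ : Measure α} {τ : Measure β} {T : α → β} (hT : Measurable T) (hmap : κ.map T = τ)
    {f : β → G} (hsm : AEStronglyMeasurable f τ) (hf : Integrable f τ) :
    Integrable (fun a => f (T a)) κ :=
  (integrable_map_measure (by rwa [hmap]) hT.aemeasurable).mp (by rwa [hmap])

private lemma integral_comp' {α β G : Type*} [MeasurableSpace α] [MeasurableSpace β]
    [NormedAddCommGroup G] [NormedSpace ℝ G]
    {κ : Measure α} {τ : Measure β} {T : α → β} (hT : Measurable T) (hmap : κ.map T = τ)
    {f : β → G} (hsm : AEStronglyMeasurable f τ) :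
    ∫ a, f (T a) ∂κ = ∫ b, f b ∂τ := by
  rw [← hmap] at hsm ⊢
  exact (integral_map hT.aemeasurable hsm).symm

private lemma ae_comp' {α β : Type*} [MeasurableSpace α] [MeasurableSpace β]
    {κ : Measure α} {τ : Measure β} {T : α → β} (hT : Measurable T) (hmap : κ.map T = τ)
    {p : β → Prop} (hp : ∀ᵐ b ∂τ, p b) : ∀ᵐ a ∂κ, p (T a) := by
  rw [← hmap] at hp
  exact ae_of_ae_map hT.aemeasurable hp

private lemma map_fst_prob {α β : Type*} [MeasurableSpace α] [MeasurableSpace β]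
    (κ : Measure α) (ν : Measure β) [SFinite κ] [IsProbabilityMeasure ν] :
    (κ.prod ν).map Prod.fst = κ := by
  rw [Measure.map_fst_prod]; simp

private lemma map_snd_prob {α β : Type*} [MeasurableSpace α] [MeasurableSpace β]
    (κ : Measure α) (ν : Measure β) [IsProbabilityMeasure κ] [SFinite ν] :
    (κ.prod ν).map Prod.snd = ν := by
  rw [Measure.map_snd_prod]; simp

private lemma norm_add3_sq {E : Type*} [NormedAddCommGroup E] [InnerProductSpace ℝ E]
    (a b c : E) : ‖a + b + c‖ ^ 2
      = ‖a‖ ^ 2 + ‖b‖ ^ 2 + ‖c‖ ^ 2 + 2 * ⟪a, b⟫ + 2 * ⟪a, c⟫ + 2 * ⟪b, c⟫ := by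
  rw [norm_add_sq_real, norm_add_sq_real, inner_add_left]; ring

section Core
variable {S E : Type*} [MeasurableSpace S] [NormedAddCommGroup E] [InnerProductSpace ℝ E]
  [MeasurableSpace E] [BorelSpace E] [SecondCountableTopology E] [CompleteSpace E]
  (μ : Measure S) [IsProbabilityMeasure μ]
  (h : S → S → E) (hm : Measurable (Function.uncurry h))
  (hsy : ∀ x y, h x y = h y x)
  (Mint : Integrable (fun p : S × S => ‖h p.1 p.2‖ ^ 2) (μ.prod μ))
  (H1 : S → E) (hH1 : ∀ x, H1 x = ∫ y, h x y ∂μ)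
  (H0 : E) (hH0 : H0 = ∫ p : S × S, h p.1 p.2 ∂(μ.prod μ))

include hm Mint hH1 hH0

private lemma hint : Integrable (fun p : S × S => h p.1 p.2) (μ.prod μ) := by
  refine ((integrable_const (1:ℝ)).add Mint).mono'
    (hm.stronglyMeasurable.aestronglyMeasurable) ?_
  filter_upwards with p
  simp only [Pi.add_apply]
  have := norm_nonneg (h p.1 p.2)
  nlinarith [sq_nonneg (‖h p.1 p.2‖ - 1)]

private lemma H1sm : StronglyMeasurable H1 := by
  have : H1 = fun x => ∫ y, (Function.uncurry h) (x, y) ∂μ := funext fun x => hH1 x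
  rw [this]
  exact hm.stronglyMeasurable.integral_prod_right'

private lemma H1sq_int_le : Integrable (fun x => ‖H1 x‖ ^ 2) μ ∧
    ∫ x, ‖H1 x‖ ^ 2 ∂μ ≤ ∫ p : S × S, ‖h p.1 p.2‖ ^ 2 ∂(μ.prod μ) := by
  have aeint : ∀ᵐ x ∂μ, Integrable (fun y => h x y) μ :=
    (hint μ h hm Mint H1 hH1 H0 hH0).prod_right_ae
  have aeint2 : ∀ᵐ x ∂μ, Integrable (fun y => ‖h x y‖ ^ 2) μ := Mint.prod_right_ae
  have hbd : ∀ᵐ x ∂μ, ‖H1 x‖ ^ 2 ≤ ∫ y, ‖h x y‖ ^ 2 ∂μ := by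
    filter_upwards [aeint, aeint2] with x h6 h7
    rw [hH1]
    calc ‖∫ y, h x y ∂μ‖ ^ 2 ≤ (∫ y, ‖h x y‖ ∂μ) ^ 2 := by
          have := norm_integral_le_integral_norm (fun y => h x y) (μ := μ)
          have h8 : (0:ℝ) ≤ ∫ y, ‖h x y‖ ∂μ := integral_nonneg fun y => norm_nonneg _
          nlinarith [norm_nonneg (∫ y, h x y ∂μ)]
      _ ≤ ∫ y, ‖h x y‖ ^ 2 ∂μ := sq_int_le μ h6.norm h7
  have hF : Integrable (fun x => ∫ y, ‖h x y‖ ^ 2 ∂μ) μ := Mint.integral_prod_left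
  have hFnn : ∀ᵐ x ∂μ, 0 ≤ ∫ y, ‖h x y‖ ^ 2 ∂μ :=
    Filter.Eventually.of_forall fun x => integral_nonneg fun y => sq_nonneg _
  have hAESM : AEStronglyMeasurable (fun x => ‖H1 x‖ ^ 2) μ :=
    (((H1sm μ h hm Mint H1 hH1 H0 hH0).norm).pow 2).aestronglyMeasurable
  have hii : Integrable (fun x => ‖H1 x‖ ^ 2) μ := by
    refine hF.mono' hAESM ?_
    filter_upwards [hbd] with x hx
    rw [Real.norm_eq_abs, abs_of_nonneg (sq_nonneg _)]
    exact hx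
  refine ⟨hii, ?_⟩
  calc ∫ x, ‖H1 x‖ ^ 2 ∂μ ≤ ∫ x, ∫ y, ‖h x y‖ ^ 2 ∂μ ∂μ := integral_mono_ae hii hF hbd
    _ = ∫ p : S × S, ‖h p.1 p.2‖ ^ 2 ∂(μ.prod μ) := integral_integral Mint

private lemma H1_int : Integrable H1 μ := by
  refine ((integrable_const (1:ℝ)).add (H1sq_int_le μ h hm Mint H1 hH1 H0 hH0).1).mono'
    (H1sm μ h hm Mint H1 hH1 H0 hH0).aestronglyMeasurable ?_
  filter_upwards with x
  simp only [Pi.add_apply]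
  have := norm_nonneg (H1 x)
  nlinarith [sq_nonneg (‖H1 x‖ - 1)]

private lemma intH1 : ∫ x, H1 x ∂μ = H0 := by
  have : ∫ x, H1 x ∂μ = ∫ x, ∫ y, h x y ∂μ ∂μ := by
    congr 1; exact funext fun x => hH1 x
  rw [this, integral_integral (hint μ h hm Mint H1 hH1 H0 hH0), hH0]

private lemma Dsq_int : Integrable (fun x => ‖H1 x - H0‖ ^ 2) μ := by
  refine (((H1sq_int_le μ h hm Mint H1 hH1 H0 hH0).1.const_mul 2).add
    (integrable_const (2 * ‖H0‖ ^ 2))).mono'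
    ((((H1sm μ h hm Mint H1 hH1 H0 hH0).sub stronglyMeasurable_const).norm.pow 2)).aestronglyMeasurable ?_
  filter_upwards with x
  simp only [Pi.add_apply]
  rw [Real.norm_eq_abs, abs_of_nonneg (sq_nonneg _)]
  have h2 : ‖H1 x - H0‖ ^ 2 ≤ (‖H1 x‖ + ‖H0‖) ^ 2 :=
    pow_le_pow_left₀ (norm_nonneg _) (norm_sub_le _ _) 2
  nlinarith [sq_nonneg (‖H1 x‖ - ‖H0‖)]

private lemma gsq_int : Integrable (fun p : S × S => ‖h p.1 p.2 - H0‖ ^ 2) (μ.prod μ) := by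
  refine ((Mint.const_mul 2).add (integrable_const (2 * ‖H0‖ ^ 2))).mono'
    (((hm.sub measurable_const).norm.pow_const 2)).aestronglyMeasurable ?_
  filter_upwards with p
  simp only [Pi.add_apply]
  rw [Real.norm_eq_abs, abs_of_nonneg (sq_nonneg _)]
  have h2 : ‖h p.1 p.2 - H0‖ ^ 2 ≤ (‖h p.1 p.2‖ + ‖H0‖) ^ 2 :=
    pow_le_pow_left₀ (norm_nonneg _) (norm_sub_le _ _) 2
  nlinarith [sq_nonneg (‖h p.1 p.2‖ - ‖H0‖)]

private lemma intD : ∫ x, (H1 x - H0) ∂μ = 0 := by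
  rw [integral_sub (H1_int μ h hm Mint H1 hH1 H0 hH0) (integrable_const _),
    intH1 μ h hm Mint H1 hH1 H0 hH0, integral_const]
  simp

private lemma gint : Integrable (fun p : S × S => h p.1 p.2 - H0) (μ.prod μ) :=
  (hint μ h hm Mint H1 hH1 H0 hH0).sub (integrable_const _)

private lemma intg : ∫ p : S × S, (h p.1 p.2 - H0) ∂(μ.prod μ) = 0 := by
  rw [integral_sub (hint μ h hm Mint H1 hH1 H0 hH0) (integrable_const _), ← hH0,
    integral_const]
  simp

private lemma quad_zero :
    ∫ t : (S × S) × (S × S), ⟪h t.1.1 t.1.2 - H0, h t.2.1 t.2.2 - H0⟫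
      ∂((μ.prod μ).prod (μ.prod μ)) = 0 := by
  have mg : Measurable (fun p : S × S => h p.1 p.2 - H0) := hm.sub measurable_const
  have mF : Measurable (fun t : (S × S) × (S × S) =>
      (⟪h t.1.1 t.1.2 - H0, h t.2.1 t.2.2 - H0⟫ : ℝ)) :=
    (mg.comp measurable_fst).inner (mg.comp measurable_snd)
  have hgsq := gsq_int μ h hm Mint H1 hH1 H0 hH0
  have hfst : Integrable (fun t : (S × S) × (S × S) => ‖h t.1.1 t.1.2 - H0‖ ^ 2)
      ((μ.prod μ).prod (μ.prod μ)) :=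
    integrable_comp' measurable_fst (map_fst_prob _ _) hgsq.aestronglyMeasurable hgsq
  have hsnd : Integrable (fun t : (S × S) × (S × S) => ‖h t.2.1 t.2.2 - H0‖ ^ 2)
      ((μ.prod μ).prod (μ.prod μ)) :=
    integrable_comp' measurable_snd (map_snd_prob _ _) hgsq.aestronglyMeasurable hgsq
  have Fint : Integrable (fun t : (S × S) × (S × S) =>
      (⟪h t.1.1 t.1.2 - H0, h t.2.1 t.2.2 - H0⟫ : ℝ)) ((μ.prod μ).prod (μ.prod μ)) := by
    refine ((hfst.const_mul (1/2)).add (hsnd.const_mul (1/2))).mono'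
      mF.aestronglyMeasurable ?_
    filter_upwards with t
    simpa using abs_real_inner_le_half (h t.1.1 t.1.2 - H0) (h t.2.1 t.2.2 - H0)
  rw [integral_prod _ Fint]
  have : ∀ u : S × S, ∫ v : S × S, ⟪h u.1 u.2 - H0, h v.1 v.2 - H0⟫ ∂(μ.prod μ) = 0 := by
    intro u
    rw [integral_inner (gint μ h hm Mint H1 hH1 H0 hH0),
      intg μ h hm Mint H1 hH1 H0 hH0, inner_zero_right]
  simp only [this, integral_zero]

private lemma triple_val :
    ∫ t : (S × S) × S, ⟪h t.1.1 t.1.2 - H0, h t.1.1 t.2 - H0⟫ ∂((μ.prod μ).prod μ)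
      = ∫ x, ‖H1 x - H0‖ ^ 2 ∂μ := by
  have mg : Measurable (fun p : S × S => h p.1 p.2 - H0) := hm.sub measurable_const
  have hgsq := gsq_int μ h hm Mint H1 hH1 H0 hH0
  have hφmap : ((μ.prod μ).prod μ).map (fun t : (S × S) × S => (t.1.1, t.2)) = μ.prod μ := by
    have : (fun t : (S × S) × S => (t.1.1, t.2)) = Prod.map (Prod.fst : S × S → S) (id : S → S) :=
      rfl
    rw [this, ← Measure.map_prod_map _ _ measurable_fst measurable_id, map_fst_prob,
      Measure.map_id]
  have mF : Measurable (fun t : (S × S) × S =>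
      (⟪h t.1.1 t.1.2 - H0, h t.1.1 t.2 - H0⟫ : ℝ)) :=
    (mg.comp measurable_fst).inner
      (mg.comp ((measurable_fst.comp measurable_fst).prodMk measurable_snd))
  have hfst : Integrable (fun t : (S × S) × S => ‖h t.1.1 t.1.2 - H0‖ ^ 2)
      ((μ.prod μ).prod μ) :=
    integrable_comp' measurable_fst (map_fst_prob _ _) hgsq.aestronglyMeasurable hgsq
  have hother : Integrable (fun t : (S × S) × S => ‖h t.1.1 t.2 - H0‖ ^ 2)
      ((μ.prod μ).prod μ) :=
    integrable_comp' ((measurable_fst.comp measurable_fst).prodMk measurable_snd) hφmap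
      hgsq.aestronglyMeasurable hgsq
  have Fint : Integrable (fun t : (S × S) × S =>
      (⟪h t.1.1 t.1.2 - H0, h t.1.1 t.2 - H0⟫ : ℝ)) ((μ.prod μ).prod μ) := by
    refine ((hfst.const_mul (1/2)).add (hother.const_mul (1/2))).mono'
      mF.aestronglyMeasurable ?_
    filter_upwards with t
    simpa using abs_real_inner_le_half (h t.1.1 t.1.2 - H0) (h t.1.1 t.2 - H0)
  rw [integral_prod _ Fint]
  have aeint : ∀ᵐ x ∂μ, Integrable (fun y => h x y) μ :=
    (hint μ h hm Mint H1 hH1 H0 hH0).prod_right_ae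
  have aeint' : ∀ᵐ p ∂(μ.prod μ), Integrable (fun y => h p.1 y) μ :=
    ae_comp' measurable_fst (map_fst_prob _ _) aeint
  have step1 : ∫ p : S × S, (∫ z, ⟪h p.1 p.2 - H0, h p.1 z - H0⟫ ∂μ) ∂(μ.prod μ)
      = ∫ p : S × S, ⟪h p.1 p.2 - H0, H1 p.1 - H0⟫ ∂(μ.prod μ) := by
    refine integral_congr_ae ?_
    filter_upwards [aeint'] with p hp
    have hps : Integrable (fun z => h p.1 z - H0) μ := by exact hp.sub (integrable_const _)
    rw [integral_inner hps]
    congr 1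
    rw [integral_sub hp (integrable_const _), integral_const, hH1 p.1]
    simp
  rw [step1]
  -- second application of Fubini
  have mK : Measurable (fun p : S × S => (⟪h p.1 p.2 - H0, H1 p.1 - H0⟫ : ℝ)) :=
    mg.inner
      (((H1sm μ h hm Mint H1 hH1 H0 hH0).measurable.comp measurable_fst).sub measurable_const)
  have hDsq := Dsq_int μ h hm Mint H1 hH1 H0 hH0
  have hD1 : Integrable (fun p : S × S => ‖H1 p.1 - H0‖ ^ 2) (μ.prod μ) :=
    integrable_comp' measurable_fst (map_fst_prob _ _) hDsq.aestronglyMeasurable hDsq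
  have Kint : Integrable (fun p : S × S => (⟪h p.1 p.2 - H0, H1 p.1 - H0⟫ : ℝ)) (μ.prod μ) := by
    refine ((hgsq.const_mul (1/2)).add (hD1.const_mul (1/2))).mono' mK.aestronglyMeasurable ?_
    filter_upwards with p
    simpa using abs_real_inner_le_half (h p.1 p.2 - H0) (H1 p.1 - H0)
  rw [integral_prod _ Kint]
  refine integral_congr_ae ?_
  filter_upwards [aeint] with x hx
  have : ∀ y, (⟪h x y - H0, H1 x - H0⟫ : ℝ) = ⟪H1 x - H0, h x y - H0⟫ := fun y =>
    real_inner_comm _ _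
  simp_rw [this]
  have hxs : Integrable (fun y => h x y - H0) μ := by exact hx.sub (integrable_const _)
  rw [integral_inner hxs]
  rw [integral_sub hx (integrable_const _), integral_const, hH1 x]
  simp [real_inner_self_eq_norm_sq]

include hsy in
private lemma Gdecomp :
    2 * ∫ x, ‖H1 x - H0‖ ^ 2 ∂μ ≤ ∫ p : S × S, ‖h p.1 p.2 - H0‖ ^ 2 ∂(μ.prod μ) ∧
    ∫ p : S × S, ‖h p.1 p.2 - H0‖ ^ 2 ∂(μ.prod μ)
      ≤ 2 * ∫ x, ‖H1 x - H0‖ ^ 2 ∂μ + 16 * ∫ p : S × S, ‖h p.1 p.2‖ ^ 2 ∂(μ.prod μ) := by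
  have H1int := H1_int μ h hm Mint H1 hH1 H0 hH0
  have hDsq := Dsq_int μ h hm Mint H1 hH1 H0 hH0
  have hgsq := gsq_int μ h hm Mint H1 hH1 H0 hH0
  have hH1sq := H1sq_int_le μ h hm Mint H1 hH1 H0 hH0
  have hsm1 := H1sm μ h hm Mint H1 hH1 H0 hH0
  have hintg := hint μ h hm Mint H1 hH1 H0 hH0
  have aeint : ∀ᵐ x ∂μ, Integrable (fun y => h x y) μ := hintg.prod_right_ae
  set ζ : S × S → E := fun p => h p.1 p.2 - H1 p.1 - H1 p.2 + H0 with hζdef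
  have mζ : Measurable ζ :=
    (((hm.sub (hsm1.measurable.comp measurable_fst)).sub
      (hsm1.measurable.comp measurable_snd)).add measurable_const)
  have mD : Measurable (fun x => H1 x - H0) := hsm1.measurable.sub measurable_const
  -- integrability of pieces
  have i2 : Integrable (fun p : S × S => ‖H1 p.1 - H0‖ ^ 2) (μ.prod μ) :=
    integrable_comp' measurable_fst (map_fst_prob _ _) hDsq.aestronglyMeasurable hDsq
  have i3 : Integrable (fun p : S × S => ‖H1 p.2 - H0‖ ^ 2) (μ.prod μ) :=
    integrable_comp' measurable_snd (map_snd_prob _ _) hDsq.aestronglyMeasurable hDsq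
  have iH1f : Integrable (fun p : S × S => ‖H1 p.1‖ ^ 2) (μ.prod μ) :=
    integrable_comp' measurable_fst (map_fst_prob _ _) hH1sq.1.aestronglyMeasurable hH1sq.1
  have iH1s : Integrable (fun p : S × S => ‖H1 p.2‖ ^ 2) (μ.prod μ) :=
    integrable_comp' measurable_snd (map_snd_prob _ _) hH1sq.1.aestronglyMeasurable hH1sq.1
  have ζbd : ∀ p : S × S, ‖ζ p‖ ^ 2
      ≤ 4 * (‖h p.1 p.2‖ ^ 2 + ‖H1 p.1‖ ^ 2 + ‖H1 p.2‖ ^ 2 + ‖H0‖ ^ 2) := by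
    intro p
    have t1 : ‖ζ p‖ ≤ ‖h p.1 p.2‖ + ‖H1 p.1‖ + ‖H1 p.2‖ + ‖H0‖ := by
      refine (norm_add_le _ _).trans ?_
      gcongr
      refine (norm_sub_le _ _).trans ?_
      gcongr
      exact norm_sub_le _ _
    have t2 : ‖ζ p‖ ^ 2 ≤ (‖h p.1 p.2‖ + ‖H1 p.1‖ + ‖H1 p.2‖ + ‖H0‖) ^ 2 :=
      pow_le_pow_left₀ (norm_nonneg _) t1 2
    nlinarith [sq_nonneg (‖h p.1 p.2‖ - ‖H1 p.1‖), sq_nonneg (‖h p.1 p.2‖ - ‖H1 p.2‖),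
      sq_nonneg (‖h p.1 p.2‖ - ‖H0‖), sq_nonneg (‖H1 p.1‖ - ‖H1 p.2‖),
      sq_nonneg (‖H1 p.1‖ - ‖H0‖), sq_nonneg (‖H1 p.2‖ - ‖H0‖)]
  have iRHS : Integrable (fun p : S × S =>
      4 * (‖h p.1 p.2‖ ^ 2 + ‖H1 p.1‖ ^ 2 + ‖H1 p.2‖ ^ 2 + ‖H0‖ ^ 2)) (μ.prod μ) := by
    exact (((Mint.add iH1f).add iH1s).add (integrable_const _)).const_mul 4
  have i1 : Integrable (fun p : S × S => ‖ζ p‖ ^ 2) (μ.prod μ) := by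
    refine iRHS.mono' ((mζ.norm.pow_const 2)).aestronglyMeasurable ?_
    filter_upwards with p
    rw [Real.norm_eq_abs, abs_of_nonneg (sq_nonneg _)]
    exact ζbd p
  have i4 : Integrable (fun p : S × S => (⟪ζ p, H1 p.1 - H0⟫ : ℝ)) (μ.prod μ) := by
    refine ((i1.const_mul (1/2)).add (i2.const_mul (1/2))).mono'
      (mζ.inner (mD.comp measurable_fst)).aestronglyMeasurable ?_
    filter_upwards with p
    simpa using abs_real_inner_le_half (ζ p) (H1 p.1 - H0)
  have i5 : Integrable (fun p : S × S => (⟪ζ p, H1 p.2 - H0⟫ : ℝ)) (μ.prod μ) := by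
    refine ((i1.const_mul (1/2)).add (i3.const_mul (1/2))).mono'
      (mζ.inner (mD.comp measurable_snd)).aestronglyMeasurable ?_
    filter_upwards with p
    simpa using abs_real_inner_le_half (ζ p) (H1 p.2 - H0)
  have i6 : Integrable (fun p : S × S => (⟪H1 p.1 - H0, H1 p.2 - H0⟫ : ℝ)) (μ.prod μ) := by
    refine ((i2.const_mul (1/2)).add (i3.const_mul (1/2))).mono'
      ((mD.comp measurable_fst).inner (mD.comp measurable_snd)).aestronglyMeasurable ?_
    filter_upwards with p
    simpa using abs_real_inner_le_half (H1 p.1 - H0) (H1 p.2 - H0)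
  have Dint : Integrable (fun x => H1 x - H0) μ := by exact H1int.sub (integrable_const _)
  -- cross terms vanish
  have cross1 : ∫ p : S × S, (⟪ζ p, H1 p.1 - H0⟫ : ℝ) ∂(μ.prod μ) = 0 := by
    rw [integral_prod _ i4]
    have : ∀ᵐ x ∂μ, ∫ y, (⟪ζ (x, y), H1 x - H0⟫ : ℝ) ∂μ = 0 := by
      filter_upwards [aeint] with x hx
      have hζx : Integrable (fun y => h x y - H1 x - H1 y + H0) μ := by
        exact ((hx.sub (integrable_const _)).sub H1int).add (integrable_const _)
      have : ∀ y, (⟪ζ (x, y), H1 x - H0⟫ : ℝ) = ⟪H1 x - H0, h x y - H1 x - H1 y + H0⟫ := by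
        intro y; rw [real_inner_comm]
      simp_rw [this]
      rw [integral_inner hζx]
      have : ∫ y, (h x y - H1 x - H1 y + H0) ∂μ = 0 := by
        have a1 : Integrable (fun y => h x y - H1 x) μ := by exact hx.sub (integrable_const _)
        have a2 : Integrable (fun y => h x y - H1 x - H1 y) μ := by exact a1.sub H1int
        rw [integral_add a2 (integrable_const _), integral_sub a1 H1int,
          integral_sub hx (integrable_const _), integral_const,
          intH1 μ h hm Mint H1 hH1 H0 hH0, ← hH1 x]
        simp
      rw [this, inner_zero_right]
    rw [integral_congr_ae this, integral_zero]
  have cross2 : ∫ p : S × S, (⟪ζ p, H1 p.2 - H0⟫ : ℝ) ∂(μ.prod μ) = 0 := by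
    have hswapmap : (μ.prod μ).map Prod.swap = μ.prod μ := Measure.prod_swap
    have hsmF : AEStronglyMeasurable (fun p : S × S => (⟪ζ p, H1 p.2 - H0⟫ : ℝ)) (μ.prod μ) :=
      (mζ.inner (mD.comp measurable_snd)).aestronglyMeasurable
    have := integral_comp' measurable_swap hswapmap hsmF
    rw [← this]
    have : ∀ p : S × S, (⟪ζ (Prod.swap p), H1 (Prod.swap p).2 - H0⟫ : ℝ)
        = ⟪ζ p, H1 p.1 - H0⟫ := by
      intro p
      have : ζ (Prod.swap p) = ζ p := by
        simp only [hζdef, Prod.swap, Prod.fst, Prod.snd]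
        rw [hsy p.2 p.1]
        abel
      rw [this]
      rfl
    simp_rw [this]
    exact cross1
  have cross3 : ∫ p : S × S, (⟪H1 p.1 - H0, H1 p.2 - H0⟫ : ℝ) ∂(μ.prod μ) = 0 := by
    rw [integral_prod _ i6]
    have : ∀ x, ∫ y, (⟪H1 x - H0, H1 y - H0⟫ : ℝ) ∂μ = 0 := by
      intro x
      rw [integral_inner Dint, intD μ h hm Mint H1 hH1 H0 hH0, inner_zero_right]
    simp_rw [this, integral_zero]
  -- marginal squares
  have D1sq : ∫ p : S × S, ‖H1 p.1 - H0‖ ^ 2 ∂(μ.prod μ) = ∫ x, ‖H1 x - H0‖ ^ 2 ∂μ :=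
    integral_comp' measurable_fst (map_fst_prob _ _) hDsq.aestronglyMeasurable
  have D2sq : ∫ p : S × S, ‖H1 p.2 - H0‖ ^ 2 ∂(μ.prod μ) = ∫ x, ‖H1 x - H0‖ ^ 2 ∂μ :=
    integral_comp' measurable_snd (map_snd_prob _ _) hDsq.aestronglyMeasurable
  -- the expansion
  have hpt : ∀ p : S × S, ‖h p.1 p.2 - H0‖ ^ 2
      = ‖ζ p‖ ^ 2 + ‖H1 p.1 - H0‖ ^ 2 + ‖H1 p.2 - H0‖ ^ 2
        + 2 * ⟪ζ p, H1 p.1 - H0⟫ + 2 * ⟪ζ p, H1 p.2 - H0⟫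
        + 2 * ⟪H1 p.1 - H0, H1 p.2 - H0⟫ := by
    intro p
    have : h p.1 p.2 - H0 = ζ p + (H1 p.1 - H0) + (H1 p.2 - H0) := by
      simp only [hζdef]; abel
    rw [this, norm_add3_sq]
  have expand : ∫ p : S × S, ‖h p.1 p.2 - H0‖ ^ 2 ∂(μ.prod μ)
      = ∫ p : S × S, ‖ζ p‖ ^ 2 ∂(μ.prod μ) + 2 * ∫ x, ‖H1 x - H0‖ ^ 2 ∂μ := by
    rw [integral_congr_ae (Filter.Eventually.of_forall hpt)]
    have c4 : Integrable (fun p : S × S => 2 * (⟪ζ p, H1 p.1 - H0⟫ : ℝ)) (μ.prod μ) := by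
      exact i4.const_mul 2
    have c5 : Integrable (fun p : S × S => 2 * (⟪ζ p, H1 p.2 - H0⟫ : ℝ)) (μ.prod μ) := by
      exact i5.const_mul 2
    have c6 : Integrable (fun p : S × S => 2 * (⟪H1 p.1 - H0, H1 p.2 - H0⟫ : ℝ)) (μ.prod μ) := by
      exact i6.const_mul 2
    have s2 : Integrable (fun p : S × S => ‖ζ p‖ ^ 2 + ‖H1 p.1 - H0‖ ^ 2) (μ.prod μ) := by
      exact i1.add i2
    have s3 : Integrable (fun p : S × S => ‖ζ p‖ ^ 2 + ‖H1 p.1 - H0‖ ^ 2 + ‖H1 p.2 - H0‖ ^ 2)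
        (μ.prod μ) := by exact s2.add i3
    have s4 : Integrable (fun p : S × S => ‖ζ p‖ ^ 2 + ‖H1 p.1 - H0‖ ^ 2 + ‖H1 p.2 - H0‖ ^ 2
        + 2 * (⟪ζ p, H1 p.1 - H0⟫ : ℝ)) (μ.prod μ) := by exact s3.add c4
    have s5 : Integrable (fun p : S × S => ‖ζ p‖ ^ 2 + ‖H1 p.1 - H0‖ ^ 2 + ‖H1 p.2 - H0‖ ^ 2
        + 2 * (⟪ζ p, H1 p.1 - H0⟫ : ℝ) + 2 * (⟪ζ p, H1 p.2 - H0⟫ : ℝ)) (μ.prod μ) := by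
      exact s4.add c5
    rw [integral_add s5 c6, integral_add s4 c5, integral_add s3 c4, integral_add s2 i3,
      integral_add i1 i2]
    rw [MeasureTheory.integral_const_mul, MeasureTheory.integral_const_mul,
      MeasureTheory.integral_const_mul, cross1, cross2, cross3, D1sq, D2sq]
    ring
  have Znn : 0 ≤ ∫ p : S × S, ‖ζ p‖ ^ 2 ∂(μ.prod μ) := integral_nonneg fun p => sq_nonneg _
  have hH0M : ‖H0‖ ^ 2 ≤ ∫ p : S × S, ‖h p.1 p.2‖ ^ 2 ∂(μ.prod μ) := by
    have t1 : ‖H0‖ ≤ ∫ p : S × S, ‖h p.1 p.2‖ ∂(μ.prod μ) := by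
      rw [hH0]; exact norm_integral_le_integral_norm _
    have t2 : (∫ p : S × S, ‖h p.1 p.2‖ ∂(μ.prod μ)) ^ 2
        ≤ ∫ p : S × S, ‖h p.1 p.2‖ ^ 2 ∂(μ.prod μ) := by
      refine sq_int_le (μ.prod μ) hintg.norm ?_
      simpa using Mint
    have t3 : ‖H0‖ ^ 2 ≤ (∫ p : S × S, ‖h p.1 p.2‖ ∂(μ.prod μ)) ^ 2 :=
      pow_le_pow_left₀ (norm_nonneg _) t1 2
    linarith
  have hH1M : ∫ p : S × S, ‖H1 p.1‖ ^ 2 ∂(μ.prod μ)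
      ≤ ∫ p : S × S, ‖h p.1 p.2‖ ^ 2 ∂(μ.prod μ) := by
    rw [integral_comp' measurable_fst (map_fst_prob _ _) hH1sq.1.aestronglyMeasurable]
    exact hH1sq.2
  have hH1M2 : ∫ p : S × S, ‖H1 p.2‖ ^ 2 ∂(μ.prod μ)
      ≤ ∫ p : S × S, ‖h p.1 p.2‖ ^ 2 ∂(μ.prod μ) := by
    rw [integral_comp' measurable_snd (map_snd_prob _ _) hH1sq.1.aestronglyMeasurable]
    exact hH1sq.2
  have Zle : ∫ p : S × S, ‖ζ p‖ ^ 2 ∂(μ.prod μ)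
      ≤ 16 * ∫ p : S × S, ‖h p.1 p.2‖ ^ 2 ∂(μ.prod μ) := by
    have step : ∫ p : S × S, ‖ζ p‖ ^ 2 ∂(μ.prod μ)
        ≤ ∫ p : S × S, 4 * (‖h p.1 p.2‖ ^ 2 + ‖H1 p.1‖ ^ 2 + ‖H1 p.2‖ ^ 2 + ‖H0‖ ^ 2)
          ∂(μ.prod μ) :=
      integral_mono i1 iRHS ζbd
    have r1 : Integrable (fun p : S × S => ‖h p.1 p.2‖ ^ 2 + ‖H1 p.1‖ ^ 2) (μ.prod μ) := by
      exact Mint.add iH1f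
    have r2 : Integrable (fun p : S × S => ‖h p.1 p.2‖ ^ 2 + ‖H1 p.1‖ ^ 2 + ‖H1 p.2‖ ^ 2)
        (μ.prod μ) := by exact r1.add iH1s
    rw [MeasureTheory.integral_const_mul,
      integral_add r2 (integrable_const _),
      integral_add r1 iH1s, integral_add Mint iH1f, integral_const] at step
    have : (μ.prod μ).real Set.univ = 1 := by simp
    rw [this, smul_eq_mul, one_mul] at step
    linarith
  constructor
  · linarith [expand, Znn]
  · linarith [expand, Zle]

end Core

/-- Two-sided bound on the mean squared error of a second-order U-statistic
about its mean: the first-order Hoeffding term is the leading term and the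
remainder is O(E‖h‖²/n²). -/
theorem U_statistic_MSE_two_sided_bound
    {Ω S : Type*} [MeasurableSpace Ω] [MeasurableSpace S] {d : ℕ}
    (P : Measure Ω) [IsProbabilityMeasure P]
    (n : ℕ) (hn : 2 ≤ n)
    (X : Fin n → Ω → S)
    (hmeas : ∀ i, Measurable (X i))
    (hindep : iIndepFun X P)
    (hident : ∀ i j, IdentDistrib (X i) (X j) P P)
    (h : S → S → EuclideanSpace ℝ (Fin d))
    (hmeash : Measurable (Function.uncurry h))
    (hsymm : ∀ x y, h x y = h y x)
    (hsq : Integrable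
      (fun ω => ‖h (X ⟨0, by omega⟩ ω) (X ⟨1, by omega⟩ ω)‖ ^ 2) P)
    (h₀ : EuclideanSpace ℝ (Fin d))
    (hh₀ : h₀ = ∫ ω, h (X ⟨0, by omega⟩ ω) (X ⟨1, by omega⟩ ω) ∂P)
    (h₁ : S → EuclideanSpace ℝ (Fin d))
    (hh₁ : ∀ x, h₁ x = ∫ ω, h x (X ⟨1, by omega⟩ ω) ∂P)
    (ζ₁ : S → EuclideanSpace ℝ (Fin d)) (hζ₁ : ∀ x, ζ₁ x = (2 : ℝ) • (h₁ x - h₀))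
    (ζ₂ : S → S → EuclideanSpace ℝ (Fin d))
    (hζ₂ : ∀ x y, ζ₂ x y = h x y - h₁ x - h₁ y + h₀)
    (U : Ω → EuclideanSpace ℝ (Fin d))
    (hU : ∀ ω, U ω = ((2 : ℝ) / ((n : ℝ) * ((n : ℝ) - 1))) •
      ∑ p ∈ univ.filter (fun p : Fin n × Fin n => p.1 < p.2),
        h (X p.1 ω) (X p.2 ω)) :
    (1 / (n : ℝ)) * (∫ ω, ‖ζ₁ (X ⟨0, by omega⟩ ω)‖ ^ 2 ∂P)
        ≤ ∫ ω, ‖U ω - h₀‖ ^ 2 ∂P ∧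
    ∫ ω, ‖U ω - h₀‖ ^ 2 ∂P
        ≤ (1 / (n : ℝ)) * (∫ ω, ‖ζ₁ (X ⟨0, by omega⟩ ω)‖ ^ 2 ∂P)
          + 32 * (∫ ω, ‖h (X ⟨0, by omega⟩ ω) (X ⟨1, by omega⟩ ω)‖ ^ 2 ∂P)
            / ((n : ℝ) * ((n : ℝ) - 1)) := by
  classical
  set i0 : Fin n := ⟨0, by omega⟩ with hi0
  set i1 : Fin n := ⟨1, by omega⟩ with hi1
  have hi01 : i0 ≠ i1 := by simp [hi0, hi1, Fin.ext_iff]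
  set μ : Measure S := P.map (X i0) with hμ
  have : IsProbabilityMeasure μ := Measure.isProbabilityMeasure_map (hmeas i0).aemeasurable
  have hmapi : ∀ i, P.map (X i) = μ := fun i => (hident i i0).map_eq
  -- pair law
  have pairlaw : ∀ i j : Fin n, i ≠ j →
      P.map (fun ω => (X i ω, X j ω)) = μ.prod μ := by
    intro i j hij
    have := (indepFun_iff_map_prod_eq_prod_map_map (hmeas i).aemeasurable
      (hmeas j).aemeasurable).mp (hindep.indepFun hij)
    rwa [hmapi i, hmapi j] at this
  -- triple law
  have triplelaw : ∀ a b c : Fin n, a ≠ b → a ≠ c → b ≠ c →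
      P.map (fun ω => ((X a ω, X b ω), X c ω)) = (μ.prod μ).prod μ := by
    intro a b c hab hac hbc
    have hI : IndepFun (fun ω => (X a ω, X b ω)) (X c) P :=
      hindep.indepFun_prodMk hmeas a b c hac hbc
    have := (indepFun_iff_map_prod_eq_prod_map_map
      ((hmeas a).prodMk (hmeas b)).aemeasurable (hmeas c).aemeasurable).mp hI
    rwa [pairlaw a b hab, hmapi c] at this
  -- quadruple law
  have quadlaw : ∀ i j k l : Fin n, i ≠ j → k ≠ l → i ≠ k → i ≠ l → j ≠ k → j ≠ l →
      P.map (fun ω => ((X i ω, X j ω), (X k ω, X l ω))) = (μ.prod μ).prod (μ.prod μ) := by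
    intro i j k l hij hkl hik hil hjk hjl
    have hI : IndepFun (fun ω => (X i ω, X j ω)) (fun ω => (X k ω, X l ω)) P :=
      hindep.indepFun_prodMk_prodMk hmeas i j k l hik hil hjk hjl
    have := (indepFun_iff_map_prod_eq_prod_map_map
      ((hmeas i).prodMk (hmeas j)).aemeasurable
      ((hmeas k).prodMk (hmeas l)).aemeasurable).mp hI
    rwa [pairlaw i j hij, pairlaw k l hkl] at this
  -- transfer square integrability
  have msq : Measurable (fun p : S × S => ‖h p.1 p.2‖ ^ 2) := hmeash.norm.pow_const 2
  have hT01 : Measurable (fun ω => (X i0 ω, X i1 ω)) := (hmeas i0).prodMk (hmeas i1)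
  have Mint : Integrable (fun p : S × S => ‖h p.1 p.2‖ ^ 2) (μ.prod μ) := by
    have e := (integrable_map_measure (f := fun ω => (X i0 ω, X i1 ω))
      (g := fun p : S × S => ‖h p.1 p.2‖ ^ 2) msq.aestronglyMeasurable
      hT01.aemeasurable).mpr hsq
    rwa [pairlaw i0 i1 hi01] at e
  have hH1' : ∀ x, h₁ x = ∫ y, h x y ∂μ := by
    intro x
    have hmx : Measurable (fun y => h x y) := hmeash.comp measurable_prodMk_left
    rw [hh₁ x, ← hmapi i1, integral_map (hmeas i1).aemeasurable hmx.aestronglyMeasurable]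
  have hH0' : h₀ = ∫ p : S × S, h p.1 p.2 ∂(μ.prod μ) := by
    have e := integral_comp' (f := fun p : S × S => h p.1 p.2) hT01 (pairlaw i0 i1 hi01)
      hmeash.aestronglyMeasurable
    rw [hh₀]
    exact e
  -- instantiate the measure-level results
  have hGdec := Gdecomp μ h hmeash hsymm Mint h₁ hH1' h₀ hH0'
  have htrip := triple_val μ h hmeash Mint h₁ hH1' h₀ hH0'
  have hquad := quad_zero μ h hmeash Mint h₁ hH1' h₀ hH0'
  have hgsq := gsq_int μ h hmeash Mint h₁ hH1' h₀ hH0'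
  have hmh1 : StronglyMeasurable h₁ := H1sm μ h hmeash Mint h₁ hH1' h₀ hH0'
  set σ2 : ℝ := ∫ x, ‖h₁ x - h₀‖ ^ 2 ∂μ with hσ2
  set M : ℝ := ∫ p : S × S, ‖h p.1 p.2‖ ^ 2 ∂(μ.prod μ) with hMdef
  set G : ℝ := ∫ p : S × S, ‖h p.1 p.2 - h₀‖ ^ 2 ∂(μ.prod μ) with hGdef
  have hσnn : 0 ≤ σ2 := integral_nonneg fun x => sq_nonneg _
  have hMnn : 0 ≤ M := integral_nonneg fun p => sq_nonneg _
  -- goal-side integral transfers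
  have hz1 : ∫ ω, ‖ζ₁ (X i0 ω)‖ ^ 2 ∂P = 4 * σ2 := by
    have e1 : ∀ ω, ‖ζ₁ (X i0 ω)‖ ^ 2 = 4 * ‖h₁ (X i0 ω) - h₀‖ ^ 2 := by
      intro ω
      rw [hζ₁, norm_smul, mul_pow, Real.norm_eq_abs]
      norm_num
    simp_rw [e1]
    have hDm : Measurable (fun x => ‖h₁ x - h₀‖ ^ 2) :=
      ((hmh1.measurable.sub measurable_const).norm.pow_const 2)
    rw [show (fun ω => 4 * ‖h₁ (X i0 ω) - h₀‖ ^ 2)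
        = fun ω => (fun x => 4 * ‖h₁ x - h₀‖ ^ 2) (X i0 ω) from rfl]
    rw [integral_comp' (hmeas i0) (hmapi i0) (hDm.const_mul 4).aestronglyMeasurable]
    rw [MeasureTheory.integral_const_mul]
  have hM : ∫ ω, ‖h (X i0 ω) (X i1 ω)‖ ^ 2 ∂P = M := by
    rw [show (fun ω => ‖h (X i0 ω) (X i1 ω)‖ ^ 2)
        = fun ω => (fun p : S × S => ‖h p.1 p.2‖ ^ 2) (X i0 ω, X i1 ω) from rfl]
    rw [integral_comp' hT01 (pairlaw i0 i1 hi01) msq.aestronglyMeasurable]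
  -- the index set
  set A := (univ : Finset (Fin n × Fin n)).filter (fun p => p.1 < p.2) with hA
  have hcardA : 2 * A.card = n * n - n := card_upper n
  have hle : n ≤ n * n := Nat.le_mul_of_pos_left n (by omega)
  have hcardAR : 2 * (A.card : ℝ) = (n : ℝ) * (n : ℝ) - (n : ℝ) := by
    have : ((2 * A.card : ℕ) : ℝ) = ((n * n - n : ℕ) : ℝ) := by rw [hcardA]
    rwa [Nat.cast_mul, Nat.cast_sub hle, Nat.cast_mul, Nat.cast_ofNat] at this
  set c : ℝ := 2 / ((n : ℝ) * ((n : ℝ) - 1)) with hc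
  have ht2 : (2 : ℝ) ≤ (n : ℝ) := by exact_mod_cast hn
  have htpos : (0 : ℝ) < (n : ℝ) := by linarith
  have hnpos : (0 : ℝ) < (n : ℝ) * ((n : ℝ) - 1) := by nlinarith
  -- rewrite U - h₀
  have hcA1 : c * (A.card : ℝ) = 1 := by
    rw [hc]; rw [div_mul_eq_mul_div, div_eq_one_iff_eq (ne_of_gt hnpos)]
    nlinarith [hcardAR]
  have hUrw : ∀ ω, U ω - h₀ = c • ∑ p ∈ A, (h (X p.1 ω) (X p.2 ω) - h₀) := by
    intro ω
    have e1 : c • ((A.card : ℝ) • h₀) = h₀ := by rw [smul_smul, hcA1, one_smul]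
    calc U ω - h₀ = c • (∑ p ∈ A, h (X p.1 ω) (X p.2 ω)) - c • ((A.card : ℝ) • h₀) := by
          rw [hU ω, e1]
      _ = c • ((∑ p ∈ A, h (X p.1 ω) (X p.2 ω)) - (A.card : ℝ) • h₀) := (smul_sub _ _ _).symm
      _ = c • ∑ p ∈ A, (h (X p.1 ω) (X p.2 ω) - h₀) := by
          rw [Finset.sum_sub_distrib, Finset.sum_const, ← Nat.cast_smul_eq_nsmul ℝ]
  have hMSE0 : ∫ ω, ‖U ω - h₀‖ ^ 2 ∂P
      = c ^ 2 * ∫ ω, ‖∑ p ∈ A, (h (X p.1 ω) (X p.2 ω) - h₀)‖ ^ 2 ∂P := by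
    have : ∀ ω, ‖U ω - h₀‖ ^ 2
        = c ^ 2 * ‖∑ p ∈ A, (h (X p.1 ω) (X p.2 ω) - h₀)‖ ^ 2 := by
      intro ω
      rw [hUrw ω, norm_smul, mul_pow, Real.norm_eq_abs, sq_abs]
    simp_rw [this]
    rw [MeasureTheory.integral_const_mul]
  -- expand the square of the sum into inner products
  have hexp : ∀ ω, ‖∑ p ∈ A, (h (X p.1 ω) (X p.2 ω) - h₀)‖ ^ 2
      = ∑ p ∈ A, ∑ q ∈ A,
          (⟪h (X p.1 ω) (X p.2 ω) - h₀, h (X q.1 ω) (X q.2 ω) - h₀⟫ : ℝ) := by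
    intro ω
    rw [← real_inner_self_eq_norm_sq, sum_inner]
    exact Finset.sum_congr rfl fun p _ => inner_sum _ _ _
  -- integrability of each inner product
  have hgsqP : ∀ p ∈ A, Integrable (fun ω => ‖h (X p.1 ω) (X p.2 ω) - h₀‖ ^ 2) P := by
    intro p hp
    have hne : p.1 ≠ p.2 := ((mem_filter.mp hp).2).ne
    have hT : Measurable (fun ω => (X p.1 ω, X p.2 ω)) := (hmeas p.1).prodMk (hmeas p.2)
    exact integrable_comp' hT (pairlaw _ _ hne) hgsq.aestronglyMeasurable hgsq
  have hJint : ∀ p ∈ A, ∀ q ∈ A, Integrable (fun ω =>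
      (⟪h (X p.1 ω) (X p.2 ω) - h₀, h (X q.1 ω) (X q.2 ω) - h₀⟫ : ℝ)) P := by
    intro p hp q hq
    have m1 : Measurable (fun ω => h (X p.1 ω) (X p.2 ω) - h₀) :=
      (hmeash.comp ((hmeas p.1).prodMk (hmeas p.2))).sub measurable_const
    have m2 : Measurable (fun ω => h (X q.1 ω) (X q.2 ω) - h₀) :=
      (hmeash.comp ((hmeas q.1).prodMk (hmeas q.2))).sub measurable_const
    refine (((hgsqP p hp).const_mul (1/2)).add ((hgsqP q hq).const_mul (1/2))).mono'
      (m1.inner m2).aestronglyMeasurable ?_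
    filter_upwards with ω
    simpa using abs_real_inner_le_half (h (X p.1 ω) (X p.2 ω) - h₀) (h (X q.1 ω) (X q.2 ω) - h₀)
  have hsumswap : ∫ ω, ‖∑ p ∈ A, (h (X p.1 ω) (X p.2 ω) - h₀)‖ ^ 2 ∂P
      = ∑ p ∈ A, ∑ q ∈ A, ∫ ω,
          (⟪h (X p.1 ω) (X p.2 ω) - h₀, h (X q.1 ω) (X q.2 ω) - h₀⟫ : ℝ) ∂P := by
    simp_rw [hexp]
    rw [integral_finset_sum A (fun p hp =>
      integrable_finset_sum A (fun q hq => hJint p hp q hq))]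
    exact Finset.sum_congr rfl fun p hp =>
      integral_finset_sum A (fun q hq => hJint p hp q hq)
  -- the key triple-overlap evaluation
  have key : ∀ a b cc : Fin n, a ≠ b → a ≠ cc → b ≠ cc →
      ∫ ω, (⟪h (X a ω) (X b ω) - h₀, h (X a ω) (X cc ω) - h₀⟫ : ℝ) ∂P = σ2 := by
    intro a b cc hab hac hbc
    have hT : Measurable (fun ω => ((X a ω, X b ω), X cc ω)) :=
      ((hmeas a).prodMk (hmeas b)).prodMk (hmeas cc)
    have mg : Measurable (fun p : S × S => h p.1 p.2 - h₀) := hmeash.sub measurable_const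
    have mF : Measurable (fun t : (S × S) × S =>
        (⟪h t.1.1 t.1.2 - h₀, h t.1.1 t.2 - h₀⟫ : ℝ)) :=
      (mg.comp measurable_fst).inner
        (mg.comp ((measurable_fst.comp measurable_fst).prodMk measurable_snd))
    have e := integral_comp' (f := fun t : (S × S) × S =>
        (⟪h t.1.1 t.1.2 - h₀, h t.1.1 t.2 - h₀⟫ : ℝ)) hT
      (triplelaw a b cc hab hac hbc) mF.aestronglyMeasurable
    exact e.trans htrip
  -- evaluation of each term
  have hJeval : ∀ p ∈ A, ∀ q ∈ A, ∫ ω,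
      (⟪h (X p.1 ω) (X p.2 ω) - h₀, h (X q.1 ω) (X q.2 ω) - h₀⟫ : ℝ) ∂P
      = if q = p then G
        else if p.1 = q.1 ∨ p.1 = q.2 ∨ p.2 = q.1 ∨ p.2 = q.2 then σ2 else 0 := by
    intro p hp q hq
    have hplt : p.1 < p.2 := (mem_filter.mp hp).2
    have hqlt : q.1 < q.2 := (mem_filter.mp hq).2
    by_cases hqp : q = p
    · subst hqp
      rw [if_pos rfl]
      have e1 : ∀ ω, (⟪h (X q.1 ω) (X q.2 ω) - h₀, h (X q.1 ω) (X q.2 ω) - h₀⟫ : ℝ)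
          = ‖h (X q.1 ω) (X q.2 ω) - h₀‖ ^ 2 := fun ω => real_inner_self_eq_norm_sq _
      simp_rw [e1]
      have hT : Measurable (fun ω => (X q.1 ω, X q.2 ω)) := (hmeas q.1).prodMk (hmeas q.2)
      exact integral_comp' hT (pairlaw _ _ hqlt.ne) hgsq.aestronglyMeasurable
    rw [if_neg hqp]
    by_cases hsh : p.1 = q.1 ∨ p.1 = q.2 ∨ p.2 = q.1 ∨ p.2 = q.2
    · rw [if_pos hsh]
      rcases hsh with e | e | e | e
      · -- p.1 = q.1
        have h1 : p.1 ≠ q.2 := by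
          intro hh; rw [e] at hh; exact hqlt.ne hh
        have h2 : p.2 ≠ q.2 := by
          intro hh; exact hqp (Prod.ext_iff.mpr ⟨e.symm, hh.symm⟩)
        have e2 : ∀ ω, h (X q.1 ω) (X q.2 ω) = h (X p.1 ω) (X q.2 ω) := by
          intro ω; rw [← e]
        simp_rw [e2]
        exact key p.1 p.2 q.2 hplt.ne h1 h2
      · -- p.1 = q.2
        have h1 : p.1 ≠ q.1 := by
          intro hh; rw [e] at hh; exact hqlt.ne' hh
        have h2 : p.2 ≠ q.1 := by
          intro hh
          rw [← hh, ← e] at hqlt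
          exact absurd (hqlt.trans hplt) (lt_irrefl _)
        have e2 : ∀ ω, h (X q.1 ω) (X q.2 ω) = h (X p.1 ω) (X q.1 ω) := by
          intro ω; rw [← e, hsymm]
        simp_rw [e2]
        exact key p.1 p.2 q.1 hplt.ne h1 h2
      · -- p.2 = q.1
        have h1 : p.2 ≠ q.2 := by
          intro hh; rw [e] at hh; exact hqlt.ne hh
        have h2 : p.1 ≠ q.2 := by
          intro hh
          rw [← e, ← hh] at hqlt
          exact absurd (hqlt.trans hplt) (lt_irrefl _)
        have e2 : ∀ ω, h (X p.1 ω) (X p.2 ω) = h (X p.2 ω) (X p.1 ω) := fun ω => hsymm _ _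
        have e3 : ∀ ω, h (X q.1 ω) (X q.2 ω) = h (X p.2 ω) (X q.2 ω) := by
          intro ω; rw [← e]
        simp_rw [e2, e3]
        exact key p.2 p.1 q.2 hplt.ne' h1 h2
      · -- p.2 = q.2
        have h1 : p.2 ≠ q.1 := by
          intro hh; rw [e] at hh; exact hqlt.ne hh.symm
        have h2 : p.1 ≠ q.1 := by
          intro hh; exact hqp (Prod.ext_iff.mpr ⟨hh.symm, e.symm⟩)
        have e2 : ∀ ω, h (X p.1 ω) (X p.2 ω) = h (X p.2 ω) (X p.1 ω) := fun ω => hsymm _ _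
        have e3 : ∀ ω, h (X q.1 ω) (X q.2 ω) = h (X p.2 ω) (X q.1 ω) := by
          intro ω; rw [hsymm, e]
        simp_rw [e2, e3]
        exact key p.2 p.1 q.1 hplt.ne' h1 h2
    · rw [if_neg hsh]
      push_neg at hsh
      obtain ⟨n1, n2, n3, n4⟩ := hsh
      have hT : Measurable (fun ω => ((X p.1 ω, X p.2 ω), (X q.1 ω, X q.2 ω))) :=
        ((hmeas p.1).prodMk (hmeas p.2)).prodMk ((hmeas q.1).prodMk (hmeas q.2))
      have mg : Measurable (fun pr : S × S => h pr.1 pr.2 - h₀) := hmeash.sub measurable_const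
      have mF : Measurable (fun t : (S × S) × (S × S) =>
          (⟪h t.1.1 t.1.2 - h₀, h t.2.1 t.2.2 - h₀⟫ : ℝ)) :=
        (mg.comp measurable_fst).inner (mg.comp measurable_snd)
      have e := integral_comp' (f := fun t : (S × S) × (S × S) =>
          (⟪h t.1.1 t.1.2 - h₀, h t.2.1 t.2.2 - h₀⟫ : ℝ)) hT
        (quadlaw p.1 p.2 q.1 q.2 hplt.ne hqlt.ne n1 n2 n3 n4) mF.aestronglyMeasurable
      exact e.trans hquad
  -- evaluate the inner sums
  have hksum : ∀ p ∈ A, (∑ q ∈ A, if q = p then G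
      else if p.1 = q.1 ∨ p.1 = q.2 ∨ p.2 = q.1 ∨ p.2 = q.2 then σ2 else 0)
      = G + ((2 * (n - 2) : ℕ) : ℝ) * σ2 := by
    intro p hp
    have hplt : p.1 < p.2 := (mem_filter.mp hp).2
    rw [Finset.sum_ite]
    have e1 : A.filter (fun q => q = p) = {p} := by
      rw [Finset.filter_eq']
      exact if_pos hp
    rw [e1, Finset.sum_const, Finset.card_singleton, one_smul]
    congr 1
    rw [Finset.sum_ite, Finset.sum_const, Finset.sum_const_zero, add_zero,
      Finset.filter_filter]
    have e3 : (A.filter fun q => (¬ q = p)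
        ∧ (p.1 = q.1 ∨ p.1 = q.2 ∨ p.2 = q.1 ∨ p.2 = q.2)).card = 2 * (n - 2) := by
      have hsc := share_card p.1 p.2 hplt
      rw [Prod.mk.eta] at hsc
      rw [hA]
      exact hsc
    rw [e3, nsmul_eq_mul]
  -- total double sum
  have hdouble : (∑ p ∈ A, ∑ q ∈ A, ∫ ω,
      (⟪h (X p.1 ω) (X p.2 ω) - h₀, h (X q.1 ω) (X q.2 ω) - h₀⟫ : ℝ) ∂P)
      = (A.card : ℝ) * (G + ((2 * (n - 2) : ℕ) : ℝ) * σ2) := by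
    have e1 : (∑ p ∈ A, ∑ q ∈ A, ∫ ω,
        (⟪h (X p.1 ω) (X p.2 ω) - h₀, h (X q.1 ω) (X q.2 ω) - h₀⟫ : ℝ) ∂P)
        = ∑ p ∈ A, (G + ((2 * (n - 2) : ℕ) : ℝ) * σ2) := by
      refine Finset.sum_congr rfl fun p hp => ?_
      rw [Finset.sum_congr rfl (fun q hq => hJeval p hp q hq), hksum p hp]
    rw [e1, Finset.sum_const, nsmul_eq_mul]
  have hkcast : ((2 * (n - 2) : ℕ) : ℝ) = 2 * ((n : ℝ) - 2) := by
    rw [Nat.cast_mul, Nat.cast_sub hn]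
    norm_num
  have hMSE : ∫ ω, ‖U ω - h₀‖ ^ 2 ∂P
      = (2 / ((n : ℝ) * ((n : ℝ) - 1))) * (G + 2 * ((n : ℝ) - 2) * σ2) := by
    rw [hMSE0, hsumswap, hdouble, hkcast]
    have hne : (n : ℝ) * ((n : ℝ) - 1) ≠ 0 := ne_of_gt hnpos
    have hcA : (A.card : ℝ) = ((n : ℝ) * (n : ℝ) - (n : ℝ)) / 2 := by linarith [hcardAR]
    rw [hcA, hc]
    field_simp
  constructor
  · rw [hz1, hMSE]
    rw [div_mul_eq_mul_div, div_mul_eq_mul_div, div_le_div_iff₀ htpos hnpos]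
    nlinarith [hGdec.1, hσnn, htpos, mul_nonneg htpos.le (sub_nonneg.mpr hGdec.1)]
  · rw [hz1, hM, hMSE]
    rw [div_mul_eq_mul_div, div_le_iff₀ hnpos]
    have expand : ((1 / (n : ℝ)) * (4 * σ2) + 32 * M / ((n : ℝ) * ((n : ℝ) - 1)))
        * ((n : ℝ) * ((n : ℝ) - 1)) = 4 * σ2 * ((n : ℝ) - 1) + 32 * M := by
      have hne : (n : ℝ) * ((n : ℝ) - 1) ≠ 0 := ne_of_gt hnpos
      have hne' : (n : ℝ) ≠ 0 := ne_of_gt htpos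
      have hne'' : (n : ℝ) - 1 ≠ 0 := by linarith
      field_simp
    rw [expand]
    nlinarith [hGdec.2, hσnn, ht2]
end

section
/- Let W be a square-integrable random vector in ℝ^d and Z a bounded random real variable such that E[‖W‖² Z] = E[‖W‖²] · E[Z], and let V = E[Z]. If V ≠ 0 and E‖W‖² > 0, then the zero baseline is strictly worse than the mean baseline: E‖(Z − V) • W‖² < E‖Z • W‖². -/
open MeasureTheory

/-- The zero baseline is strictly worse than the mean baseline (strict
inequality part of Corollary 5 of the paper). -/
theorem zero_baseline_strictly_worse
    {Ω : Type*} [MeasurableSpace Ω] {d : ℕ}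
    (ℙ : Measure Ω) [IsProbabilityMeasure ℙ]
    (W : Ω → EuclideanSpace ℝ (Fin d)) (Z : Ω → ℝ)
    (hW : MemLp W 2 ℙ) (hZmeas : Measurable Z)
    (hZbdd : ∃ c : ℝ, ∀ᵐ ω ∂ℙ, |Z ω| ≤ c)
    (huncorr : ∫ ω, ‖W ω‖ ^ 2 * Z ω ∂ℙ
      = (∫ ω, ‖W ω‖ ^ 2 ∂ℙ) * (∫ ω, Z ω ∂ℙ))
    (V : ℝ) (hV : V = ∫ ω, Z ω ∂ℙ)
    (hVne : V ≠ 0) (hWpos : 0 < ∫ ω, ‖W ω‖ ^ 2 ∂ℙ) :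
    ∫ ω, ‖(Z ω - V) • W ω‖ ^ 2 ∂ℙ < ∫ ω, ‖Z ω • W ω‖ ^ 2 ∂ℙ := by
  obtain ⟨c, hc⟩ := hZbdd
  -- integrability of ‖W‖²
  have hf : Integrable (fun ω => ‖W ω‖ ^ 2) ℙ := by
    have := hW.integrable_norm_rpow (by norm_num) (by norm_num)
    simpa [ENNReal.toReal_ofNat, Real.rpow_natCast] using this
  -- integrability of Z * ‖W‖²
  have hZf : Integrable (fun ω => Z ω * ‖W ω‖ ^ 2) ℙ :=
    hf.bdd_mul (hZmeas.aestronglyMeasurable) (by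
      filter_upwards [hc] with ω hω using by simpa [Real.norm_eq_abs] using hω)
  -- integrability of Z² * ‖W‖²
  have hZ2f : Integrable (fun ω => Z ω ^ 2 * ‖W ω‖ ^ 2) ℙ :=
    hf.bdd_mul ((hZmeas.pow_const 2).aestronglyMeasurable) (by
      filter_upwards [hc] with ω hω
      have : |Z ω| ^ 2 ≤ c ^ 2 := by
        have := abs_nonneg (Z ω)
        nlinarith
      simpa [Real.norm_eq_abs, abs_pow, sq_abs] using this)
  -- integrability of (Z - V)² * ‖W‖²
  have hZV2f : Integrable (fun ω => (Z ω - V) ^ 2 * ‖W ω‖ ^ 2) ℙ :=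
    hf.bdd_mul (((hZmeas.sub_const V).pow_const 2).aestronglyMeasurable) (by
      filter_upwards [hc] with ω hω
      have h1 : |Z ω - V| ≤ c + |V| := by
        have := abs_sub_abs_le_abs_sub (Z ω) V
        have := abs_sub (Z ω) V
        calc |Z ω - V| ≤ |Z ω| + |V| := abs_sub _ _
          _ ≤ c + |V| := by linarith
      have : |Z ω - V| ^ 2 ≤ (c + |V|) ^ 2 := by
        have := abs_nonneg (Z ω - V)
        nlinarith
      simpa [Real.norm_eq_abs, abs_pow, sq_abs] using this)
  -- rewrite integrands
  have e1 : ∀ ω, ‖Z ω • W ω‖ ^ 2 = Z ω ^ 2 * ‖W ω‖ ^ 2 := fun ω => by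
    rw [norm_smul]; simp [Real.norm_eq_abs, mul_pow, sq_abs]
  have e2 : ∀ ω, ‖(Z ω - V) • W ω‖ ^ 2 = (Z ω - V) ^ 2 * ‖W ω‖ ^ 2 := fun ω => by
    rw [norm_smul]; simp [Real.norm_eq_abs, mul_pow, sq_abs]
  simp only [e1, e2]
  -- compute the difference
  have key : ∫ ω, Z ω ^ 2 * ‖W ω‖ ^ 2 ∂ℙ - ∫ ω, (Z ω - V) ^ 2 * ‖W ω‖ ^ 2 ∂ℙ
      = V ^ 2 * ∫ ω, ‖W ω‖ ^ 2 ∂ℙ := by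
    rw [← integral_sub hZ2f hZV2f]
    have : ∀ ω, Z ω ^ 2 * ‖W ω‖ ^ 2 - (Z ω - V) ^ 2 * ‖W ω‖ ^ 2
        = (2 * V) * (Z ω * ‖W ω‖ ^ 2) - V ^ 2 * ‖W ω‖ ^ 2 := fun ω => by ring
    simp only [this]
    rw [integral_sub (hZf.const_mul _) (hf.const_mul _), integral_const_mul,
      integral_const_mul]
    have hZfval : ∫ ω, Z ω * ‖W ω‖ ^ 2 ∂ℙ = (∫ ω, ‖W ω‖ ^ 2 ∂ℙ) * (∫ ω, Z ω ∂ℙ) := by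
      rw [← huncorr]; congr 1; ext ω; ring
    rw [hZfval, ← hV]; ring
  have hV2 : 0 < V ^ 2 := by positivity
  have hpos : 0 < V ^ 2 * ∫ ω, ‖W ω‖ ^ 2 ∂ℙ := mul_pos hV2 hWpos
  linarith [key, hpos]
end

section
/- Let J : ℝ^d → ℝ be twice continuously differentiable, let μ > 0, and suppose the Polyak–Łojasiewicz condition holds: ‖∇J(θ)‖² ≥ 2μ (J(θ*) − J(θ)) for all θ ∈ ℝ^d, where θ* is a global maximizer of J. Let λ > 0 and let v be a unit vector that is an eigenvector of the Hessian of J at θ* with eigenvalue −λ (i.e., the second derivative bilinear form H of J at θ* satisfies H(v, u) = −λ ⟨v, u⟩ for all u ∈ ℝ^d). Then λ ≥ μ. -/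
open scoped RealInnerProductSpace

open Filter Topology

set_option maxHeartbeats 1000000 in
/-- First assertion of Lemma B.3 of the paper: under the PL condition with
constant μ, every positive eigenvalue of the negative Hessian at a global
maximizer is at least μ. -/
theorem PL_eigenvalue_lower_bound {d : ℕ}
    (J : EuclideanSpace ℝ (Fin d) → ℝ) (hJ : ContDiff ℝ 2 J)
    (μ : ℝ) (hμ : 0 < μ)
    (θstar : EuclideanSpace ℝ (Fin d))
    (hmax : ∀ θ, J θ ≤ J θstar)
    (hPL : ∀ θ, ‖gradient J θ‖ ^ 2 ≥ 2 * μ * (J θstar - J θ))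
    (lam : ℝ) (hlam : 0 < lam)
    (v : EuclideanSpace ℝ (Fin d)) (hv : ‖v‖ = 1)
    (heig : ∀ u, fderiv ℝ (fun θ => fderiv ℝ J θ) θstar v u = -lam * ⟪v, u⟫) :
    μ ≤ lam := by
  set c : ℝ → EuclideanSpace ℝ (Fin d) := fun t => θstar + t • v with hc
  have hc0 : c 0 = θstar := by simp [hc]
  have hcder : ∀ t : ℝ, HasDerivAt c v t := by
    intro t
    simpa [hc] using ((hasDerivAt_id t).smul_const v).const_add θstar
  have hJd : Differentiable ℝ J := hJ.differentiable (by norm_num)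
  -- the derivative of J vanishes at the maximizer
  have hf0 : fderiv ℝ J θstar = 0 := by
    apply IsLocalMax.fderiv_eq_zero
    exact Filter.Eventually.of_forall hmax
  -- the Hessian as fderiv of fderiv
  set A : EuclideanSpace ℝ (Fin d) →L[ℝ] EuclideanSpace ℝ (Fin d) →L[ℝ] ℝ := fderiv ℝ (fun θ => fderiv ℝ J θ) θstar with hA
  have hderC1 : ContDiff ℝ 1 (fun θ => fderiv ℝ J θ) := hJ.fderiv_right (by norm_num)
  have hAder : HasFDerivAt (fun θ => fderiv ℝ J θ) A θstar :=
    (hderC1.differentiable (by norm_num) θstar).hasFDerivAt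
  set F : ℝ → (EuclideanSpace ℝ (Fin d) →L[ℝ] ℝ) := fun t => fderiv ℝ J (c t) with hF
  have hFder : HasDerivAt F (A v) 0 := by
    have h1 : HasFDerivAt (fun θ => fderiv ℝ J θ) A (c 0) := hc0 ▸ hAder
    have := h1.comp_hasDerivAt 0 (hcder 0)
    simpa [hF, Function.comp_def] using this
  have hF0 : F 0 = 0 := by rw [hF]; simp [hc0, hf0]
  -- A v = toDual (-lam • v)
  have hAv : A v = InnerProductSpace.toDual ℝ (EuclideanSpace ℝ (Fin d)) ((-lam) • v) := by
    ext u
    simp [heig u, real_inner_smul_left]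
  have hAvnorm : ‖A v‖ = lam := by
    rw [hAv, (InnerProductSpace.toDual ℝ (EuclideanSpace ℝ (Fin d))).norm_map, norm_smul, hv]
    simp [abs_of_pos hlam]
  have hAvv : A v v = -lam := by
    have h1 : ⟪v, v⟫ = (1:ℝ) := by
      rw [real_inner_self_eq_norm_sq, hv]; norm_num
    rw [heig v, h1]; ring
  -- Limit 1 : ‖F t‖² / t² → lam²
  have hslopeF : Tendsto (fun t : ℝ => t⁻¹ • (F t)) (𝓝[≠] (0:ℝ)) (𝓝 (A v)) := by
    have h2 := hasDerivAt_iff_tendsto_slope.mp hFder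
    refine h2.congr' ?_
    filter_upwards with t
    rw [slope_def_module, hF0, sub_zero, sub_zero]
  have L1 : Tendsto (fun t : ℝ => ‖F t‖ ^ 2 / t ^ 2) (𝓝[≠] (0:ℝ)) (𝓝 (lam ^ 2)) := by
    have h1 : Tendsto (fun t : ℝ => ‖t⁻¹ • F t‖ ^ 2) (𝓝[≠] (0:ℝ)) (𝓝 (‖A v‖ ^ 2)) :=
      ((continuous_norm.pow 2).continuousAt.tendsto).comp hslopeF
    rw [hAvnorm] at h1
    refine h1.congr' ?_
    filter_upwards [self_mem_nhdsWithin] with t ht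
    have ht' : (t:ℝ) ≠ 0 := ht
    have h3 : ‖t⁻¹ • F t‖ = ‖t⁻¹‖ * ‖F t‖ := norm_smul t⁻¹ (F t)
    rw [h3, mul_pow, norm_inv, Real.norm_eq_abs, inv_pow, sq_abs, inv_mul_eq_div]
  -- the restriction of J to the line
  set h : ℝ → ℝ := fun t => J (c t) with hh
  have hhder : ∀ t : ℝ, HasDerivAt h (F t v) t := by
    intro t
    have := (hJd (c t)).hasFDerivAt.comp_hasDerivAt t (hcder t)
    simpa [hh, hF, Function.comp_def] using this
  -- Limit for h' : F t v / t → -lam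
  have hFvder : HasDerivAt (fun t : ℝ => F t v) (A v v) 0 := by
    have := hFder.clm_apply (hasDerivAt_const (0:ℝ) v)
    simpa using this
  have hslopeFv : Tendsto (fun t : ℝ => (F t v) / t) (𝓝[≠] (0:ℝ)) (𝓝 (-lam)) := by
    have h2 := hasDerivAt_iff_tendsto_slope.mp hFvder
    rw [hAvv] at h2
    refine h2.congr' ?_
    filter_upwards with t
    rw [slope_def_field, hF0]
    simp [div_eq_inv_mul]
  -- Limit 2 : (h t - h 0) / t² → -lam/2 by L'Hôpital
  have L2 : Tendsto (fun t : ℝ => (h t - h 0) / t ^ 2) (𝓝[≠] (0:ℝ)) (𝓝 (-lam / 2)) := by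
    apply HasDerivAt.lhopital_zero_nhdsNE (f' := fun t => F t v) (g' := fun t => 2 * t)
    · filter_upwards with t
      exact (hhder t).sub_const (h 0)
    · filter_upwards with t
      simpa using hasDerivAt_pow 2 t
    · filter_upwards [self_mem_nhdsWithin] with t ht
      have ht' : (t:ℝ) ≠ 0 := ht
      exact mul_ne_zero two_ne_zero ht'
    · have hcont : Continuous h := by
        apply hJ.continuous.comp
        exact continuous_const.add (continuous_id.smul continuous_const)
      have h4 := (hcont.tendsto 0).mono_left (nhdsWithin_le_nhds (s := {(0:ℝ)}ᶜ))
      simpa using h4.sub_const (h 0)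
    · have h5 : Tendsto (fun t : ℝ => t ^ 2) (𝓝 (0:ℝ)) (𝓝 (0:ℝ)) := by
        simpa using (continuous_pow 2).tendsto (0:ℝ)
      exact h5.mono_left nhdsWithin_le_nhds
    · have h6 := hslopeFv.div_const 2
      have h7 : -lam / 2 = -lam / 2 := rfl
      refine h6.congr' ?_
      filter_upwards with t
      rw [div_div, mul_comm]
  -- combine
  have h0 : h 0 = J θstar := by rw [hh]; simp [hc0]
  have L2' : Tendsto (fun t : ℝ => 2 * μ * ((J θstar - h t) / t ^ 2)) (𝓝[≠] (0:ℝ))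
      (𝓝 (μ * lam)) := by
    have h1 := L2.const_mul (-(2*μ))
    have h2 : -(2*μ) * (-lam/2) = μ * lam := by ring
    rw [h2] at h1
    refine h1.congr fun t => ?_
    rw [h0]; ring
  have key : μ * lam ≤ lam ^ 2 := by
    refine le_of_tendsto_of_tendsto L2' L1 ?_
    filter_upwards [self_mem_nhdsWithin] with t ht
    have ht' : (t:ℝ) ≠ 0 := ht
    have ht2 : (0:ℝ) < t ^ 2 := by positivity
    have hgn : ‖gradient J (c t)‖ = ‖F t‖ := by
      rw [gradient, (InnerProductSpace.toDual ℝ (EuclideanSpace ℝ (Fin d))).symm.norm_map]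
    have hpl : 2 * μ * (J θstar - h t) ≤ ‖F t‖ ^ 2 := by
      have := hPL (c t)
      rwa [hgn] at this
    calc 2 * μ * ((J θstar - h t) / t ^ 2) = (2 * μ * (J θstar - h t)) / t ^ 2 := by ring
      _ ≤ ‖F t‖ ^ 2 / t ^ 2 := by gcongr
  nlinarith [key]
end

section
/- Let J : ℝ^d → ℝ be twice continuously differentiable and let Θ* ⊆ ℝ^d be a nonempty convex set such that every θ* ∈ Θ* is a global maximizer of J. Suppose there exist an integer r ≥ 1, a d × r real matrix Q with orthonormal columns (QᵀQ = I_r), and positive reals λ₁, …, λ_r such that at every θ* ∈ Θ* the Hessian quadratic form of J satisfies uᵀ H(θ*) u = − ∑_{k=1}^r λ_k (Qᵀu)_k² for all u ∈ ℝ^d. Then the map θ ↦ Qᵀθ is constant on Θ*: for all θ₁*, θ₂* ∈ Θ*, Qᵀθ₁* = Qᵀθ₂*. -/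
open scoped RealInnerProductSpace

/-- Lemma B.2 of the paper: under the shared-rank Hessian structure, the
projection of the optimal set onto the identifiable subspace (spanned by the
orthonormal columns q of Q) is a single point. -/
theorem projected_optimal_set_singleton {d : ℕ}
    (J : EuclideanSpace ℝ (Fin d) → ℝ) (hJ : ContDiff ℝ 2 J)
    (Θstar : Set (EuclideanSpace ℝ (Fin d)))
    (hne : Θstar.Nonempty) (hconv : Convex ℝ Θstar)
    (hmax : ∀ θstar ∈ Θstar, ∀ θ, J θ ≤ J θstar)
    (r : ℕ) (hr : 1 ≤ r)
    (q : Fin r → EuclideanSpace ℝ (Fin d)) (hq : Orthonormal ℝ q)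
    (lam : Fin r → ℝ) (hlam : ∀ k, 0 < lam k)
    (hHess : ∀ θstar ∈ Θstar, ∀ u,
      fderiv ℝ (fun θ => fderiv ℝ J θ) θstar u u
        = -∑ k, lam k * ⟪q k, u⟫ ^ 2) :
    ∀ θ₁ ∈ Θstar, ∀ θ₂ ∈ Θstar, ∀ k, ⟪q k, θ₁⟫ = ⟪q k, θ₂⟫ := by
  intro θ₁ hθ₁ θ₂ hθ₂ k
  set u : EuclideanSpace ℝ (Fin d) := θ₂ - θ₁ with hu
  set θm : EuclideanSpace ℝ (Fin d) := ((1:ℝ)/2) • θ₁ + ((1:ℝ)/2) • θ₂ with hθm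
  have hθmΘ : θm ∈ Θstar := hconv hθ₁ hθ₂ (by norm_num) (by norm_num) (by norm_num)
  set L : ℝ → EuclideanSpace ℝ (Fin d) := fun t => θm + t • u with hL
  -- L t ∈ Θstar for |t| < 1/2
  have hLmem : ∀ t ∈ Set.Ioo (-(1:ℝ)/2) (1/2), L t ∈ Θstar := by
    intro t ht
    have h1 : L t = ((1:ℝ)/2 - t) • θ₁ + ((1:ℝ)/2 + t) • θ₂ := by
      simp only [hL, hθm, hu]
      module
    rw [h1]
    exact hconv hθ₁ hθ₂ (by linarith [ht.1, ht.2]) (by linarith [ht.1, ht.2]) (by ring)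
  -- J is constant on Θstar
  have hconst : ∀ θ ∈ Θstar, J θ = J θ₁ :=
    fun θ hθ => le_antisymm (hmax θ₁ hθ₁ θ) (hmax θ hθ θ₁)
  have hJdiff : Differentiable ℝ J := hJ.differentiable (by norm_num)
  have hFdiff : Differentiable ℝ (fun θ => fderiv ℝ J θ) :=
    (hJ.fderiv_right (m := 1) (by norm_num)).differentiable (by norm_num)
  -- derivative of L
  have hLderiv : ∀ t : ℝ, HasDerivAt L u t := by
    intro t
    simpa [hL] using ((hasDerivAt_id t).smul_const u).const_add θm
  -- fderiv J (L t) u = 0 for t in the open interval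
  have hφ0 : ∀ t ∈ Set.Ioo (-(1:ℝ)/2) (1/2), fderiv ℝ J (L t) u = 0 := by
    intro t ht
    have h1 : HasDerivAt (fun s => J (L s)) (fderiv ℝ J (L t) u) t :=
      (hJdiff (L t)).hasFDerivAt.comp_hasDerivAt t (hLderiv t)
    have hmem : Set.Ioo (-(1:ℝ)/2) (1/2) ∈ nhds t :=
      isOpen_Ioo.mem_nhds ht
    have heq : (fun s => J (L s)) =ᶠ[nhds t] fun _ => J θ₁ := by
      filter_upwards [hmem] with s hs
      exact hconst (L s) (hLmem s hs)
    have h2 : HasDerivAt (fun s => J (L s)) 0 t :=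
      (hasDerivAt_const t (J θ₁)).congr_of_eventuallyEq heq
    exact h1.unique h2
  -- second derivative along u is zero
  have hHuu : fderiv ℝ (fun θ => fderiv ℝ J θ) θm u u = 0 := by
    have hL0 : L 0 = θm := by simp [hL]
    have h1 : HasDerivAt (fun t => fderiv ℝ J (L t))
        (fderiv ℝ (fun θ => fderiv ℝ J θ) θm u) 0 := by
      have := ((hFdiff (L 0)).hasFDerivAt).comp_hasDerivAt 0 (hLderiv 0)
      rw [hL0] at this; exact this
    have h2 : HasDerivAt (fun t => fderiv ℝ J (L t) u)
        (fderiv ℝ (fun θ => fderiv ℝ J θ) θm u u) 0 := by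
      simpa using h1.clm_apply (hasDerivAt_const 0 u)
    have hmem : Set.Ioo (-(1:ℝ)/2) (1/2) ∈ nhds (0:ℝ) :=
      isOpen_Ioo.mem_nhds (by norm_num)
    have heq : (fun t => fderiv ℝ J (L t) u) =ᶠ[nhds (0:ℝ)] fun _ => (0:ℝ) := by
      filter_upwards [hmem] with s hs
      rw [hφ0 s hs]
    have h3 : HasDerivAt (fun t => fderiv ℝ J (L t) u) 0 0 :=
      (hasDerivAt_const 0 (0:ℝ)).congr_of_eventuallyEq heq
    exact h2.unique h3
  -- conclude each inner product is zero
  have hsum : ∑ j, lam j * ⟪q j, u⟫ ^ 2 = 0 := by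
    have := hHess θm hθmΘ u
    rw [hHuu] at this
    linarith
  have hterm : lam k * ⟪q k, u⟫ ^ 2 = 0 := by
    have hnn : ∀ j ∈ Finset.univ, 0 ≤ lam j * ⟪q j, u⟫ ^ 2 :=
      fun j _ => mul_nonneg (hlam j).le (sq_nonneg _)
    exact (Finset.sum_eq_zero_iff_of_nonneg hnn).mp hsum k (Finset.mem_univ k)
  have h0 : ⟪q k, u⟫ = 0 := by
    have := (mul_eq_zero.mp hterm).resolve_left (hlam k).ne'
    exact pow_eq_zero_iff (by norm_num) |>.mp this
  have : ⟪q k, θ₂⟫ - ⟪q k, θ₁⟫ = 0 := by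
    rw [← inner_sub_right]; exact h0
  linarith
end

section
/- Let μ, L, M, β, ā be reals with 0 < μ ≤ L, M ≥ 0, ā > 0 and β > 1/(2μ), and let (a_n)_{n ≥ 1} be a sequence with 0 ≤ a_n ≤ ā satisfying a_{n+1} ≤ (1 − 2μβ/n + μLβ²/n²) a_n + Lβ²M/(2n²) for all n ≥ 1. Then for every ε > 0 there exists a constant c > 0, depending only on (β, μ, L, M, ā, ε), such that a_n ≤ max{ (1+ε) L β² M / ((4μβ − 2) n), c/n } for all n ≥ 1. -/
set_option maxHeartbeats 1000000

/-- Deterministic recursion underlying the 1/i learning-rate case of Lemma 9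
of the paper: an O(1/n) bound whose leading constant is proportional to the
gradient estimator's MSE bound M, with the constant c depending only on
(β, μ, L, M, ā, ε). -/
theorem one_over_n_stepsize_recursion
    (μ L M β abar : ℝ)
    (hμ : 0 < μ) (hμL : μ ≤ L) (hM : 0 ≤ M) (habar : 0 < abar)
    (hβ : 1 / (2 * μ) < β) :
    ∀ ε : ℝ, 0 < ε → ∃ c : ℝ, 0 < c ∧
      ∀ a : ℕ → ℝ,
        (∀ n : ℕ, 1 ≤ n → 0 ≤ a n ∧ a n ≤ abar) →
        (∀ n : ℕ, 1 ≤ n →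
          a (n + 1) ≤ (1 - 2 * μ * β / n + μ * L * β ^ 2 / (n : ℝ) ^ 2) * a n
            + L * β ^ 2 * M / (2 * (n : ℝ) ^ 2)) →
        ∀ n : ℕ, 1 ≤ n →
          a n ≤ max ((1 + ε) * L * β ^ 2 * M / ((4 * μ * β - 2) * n)) (c / n) := by
  intro ε hε
  have hL : 0 < L := hμ.trans_le hμL
  have hβ0 : 0 < β := lt_trans (by positivity) hβ
  have hA1 : 1 < 2 * μ * β := by
    rw [div_lt_iff₀ (by positivity : (0:ℝ) < 2 * μ)] at hβ
    nlinarith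
  obtain ⟨C, hCdef⟩ : ∃ C : ℝ, C = L * β ^ 2 * M / 2 := ⟨_, rfl⟩
  have hC0 : 0 ≤ C := by rw [hCdef]; positivity
  obtain ⟨B, hBdef⟩ : ∃ B : ℝ, B = μ * L * β ^ 2 := ⟨_, rfl⟩
  have hB0 : 0 < B := by rw [hBdef]; positivity
  obtain ⟨K, hKdef⟩ : ∃ K : ℝ, K = (1 + ε) * L * β ^ 2 * M / (4 * μ * β - 2) := ⟨_, rfl⟩
  have h42 : (0:ℝ) < 4 * μ * β - 2 := by linarith
  have hK0 : 0 ≤ K := by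
    rw [hKdef]
    exact div_nonneg (by nlinarith) h42.le
  have hKC : C * (1 + ε) = K * (2 * μ * β - 1) := by
    rw [hKdef, hCdef]
    rw [div_mul_eq_mul_div _ (4 * μ * β - 2), eq_div_iff h42.ne']
    ring
  obtain ⟨N, hNdef⟩ : ∃ N : ℕ, N = ⌈B * (1 + ε) / ((2 * μ * β - 1) * ε)⌉₊ + 1 := ⟨_, rfl⟩
  have hN1 : 1 ≤ N := by omega
  have hNR : B * (1 + ε) / ((2 * μ * β - 1) * ε) ≤ (N : ℝ) := by
    rw [hNdef]
    push_cast
    linarith [Nat.le_ceil (B * (1 + ε) / ((2 * μ * β - 1) * ε))]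
  have hNB : B * (1 + ε) ≤ (2 * μ * β - 1) * ε * (N : ℝ) := by
    rw [div_le_iff₀ (mul_pos (by linarith : (0:ℝ) < 2 * μ * β - 1) hε)] at hNR
    nlinarith
  have hNpos : (0:ℝ) < (N : ℝ) := by exact_mod_cast Nat.pos_of_ne_zero (by omega)
  have hNcast1 : (1:ℝ) ≤ (N : ℝ) := by exact_mod_cast hN1
  refine ⟨abar * (N : ℝ) + 2 * C + 1, by nlinarith [mul_pos habar hNpos], ?_⟩
  set c := abar * (N : ℝ) + 2 * C + 1 with hcdef
  have hc0 : 0 < c := by nlinarith [mul_pos habar hNpos]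
  intro a hbound hrec
  set D := max K c with hDdef
  have hcD : c ≤ D := le_max_right _ _
  have hKD : K ≤ D := le_max_left _ _
  have hD0 : 0 < D := lt_of_lt_of_le hc0 hcD
  have h2CD : 2 * C ≤ D := by
    have := mul_pos habar hNpos
    calc 2 * C ≤ c := by rw [hcdef]; linarith
      _ ≤ D := hcD
  have main : ∀ n : ℕ, 1 ≤ n → a n ≤ D / n := by
    intro n hn
    induction n, hn using Nat.le_induction with
    | base =>
      have h := (hbound 1 le_rfl).2
      simp only [Nat.cast_one, div_one]
      have habN : abar * 1 ≤ abar * (N:ℝ) := mul_le_mul_of_nonneg_left hNcast1 habar.le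
      have : abar ≤ c := by rw [hcdef]; linarith
      linarith
    | succ n hn ih =>
      have hn0 : (0:ℝ) < (n : ℝ) := by exact_mod_cast hn
      have hn1R : (1:ℝ) ≤ (n : ℝ) := by exact_mod_cast hn
      push_cast
      by_cases hcase : n + 1 ≤ N
      · -- small n: use the uniform bound abar
        have h := (hbound (n+1) (by omega)).2
        have hnN : ((n:ℝ) + 1) ≤ (N : ℝ) := by exact_mod_cast hcase
        have habc : abar ≤ c / ((n:ℝ) + 1) := by
          rw [le_div_iff₀ (by linarith)]
          have : abar * ((n:ℝ) + 1) ≤ abar * (N : ℝ) :=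
            mul_le_mul_of_nonneg_left hnN habar.le
          nlinarith
        have hcast : a (n+1) ≤ c / ((n:ℝ) + 1) := by
          have h' : a (n+1) ≤ abar := by exact_mod_cast h
          linarith
        have : c / ((n:ℝ) + 1) ≤ D / ((n:ℝ) + 1) := by gcongr
        linarith
      · -- large n: use the recursion
        have hNn : (N : ℝ) ≤ (n : ℝ) := by exact_mod_cast (by omega : N ≤ n)
        have hrecn := hrec n hn
        have ha0 := (hbound n hn).1
        have hCD : C * (n:ℝ) + B * D ≤ (2 * μ * β - 1) * D * (n:ℝ) := by
          have h1' : C * (1 + ε) ≤ D * (2 * μ * β - 1) := by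
            rw [hKC]
            exact mul_le_mul_of_nonneg_right hKD (by linarith)
          have h1 : C * (1 + ε) * (n:ℝ) ≤ D * (2 * μ * β - 1) * (n:ℝ) :=
            mul_le_mul_of_nonneg_right h1' hn0.le
          have h2' : B * (1 + ε) ≤ (2 * μ * β - 1) * ε * (n:ℝ) := by
            calc B * (1 + ε) ≤ (2 * μ * β - 1) * ε * (N:ℝ) := hNB
              _ ≤ (2 * μ * β - 1) * ε * (n:ℝ) := by
                  apply mul_le_mul_of_nonneg_left hNn (by nlinarith)
          have h2 : B * (1 + ε) * D ≤ (2 * μ * β - 1) * ε * (n:ℝ) * D :=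
            mul_le_mul_of_nonneg_right h2' hD0.le
          nlinarith [h1, h2]
        by_cases hcoef : 0 ≤ 1 - 2 * μ * β / (n:ℝ) + μ * L * β ^ 2 / (n:ℝ) ^ 2
        · have hstep : a (n+1) ≤ (1 - 2 * μ * β / (n:ℝ) + μ * L * β ^ 2 / (n:ℝ) ^ 2) * (D / n)
              + L * β ^ 2 * M / (2 * (n:ℝ) ^ 2) := by
            refine hrecn.trans ?_
            have := mul_le_mul_of_nonneg_left ih hcoef
            linarith
          have key : (1 - 2 * μ * β / (n:ℝ) + μ * L * β ^ 2 / (n:ℝ) ^ 2) * (D / n)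
              + L * β ^ 2 * M / (2 * (n:ℝ) ^ 2) ≤ D / ((n:ℝ) + 1) := by
            have e1 : (1 - 2 * μ * β / (n:ℝ) + μ * L * β ^ 2 / (n:ℝ) ^ 2) * (D / n)
                + L * β ^ 2 * M / (2 * (n:ℝ) ^ 2)
                = (((n:ℝ) ^ 2 - 2 * μ * β * (n:ℝ) + B) * D * ((n:ℝ) + 1)
                    + C * (n:ℝ) * ((n:ℝ) + 1)) / ((n:ℝ) ^ 3 * ((n:ℝ) + 1)) := by
              rw [hBdef, hCdef]
              field_simp
            have e2 : D / ((n:ℝ) + 1) = D * (n:ℝ) ^ 3 / ((n:ℝ) ^ 3 * ((n:ℝ) + 1)) := by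
              field_simp
            rw [e1, e2]
            apply div_le_div_of_nonneg_right ?_ (by positivity)
            · nlinarith [mul_le_mul_of_nonneg_right hCD (by linarith : (0:ℝ) ≤ (n:ℝ) + 1)]
          linarith
        · push_neg at hcoef
          have hsmall : a (n+1) ≤ L * β ^ 2 * M / (2 * (n:ℝ) ^ 2) := by
            have h0 : (1 - 2 * μ * β / (n:ℝ) + μ * L * β ^ 2 / (n:ℝ) ^ 2) * a n ≤ 0 :=
              mul_nonpos_of_nonpos_of_nonneg hcoef.le ha0
            linarith
          have hLC : L * β ^ 2 * M = 2 * C := by rw [hCdef]; ring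
          have hfin : L * β ^ 2 * M / (2 * (n:ℝ) ^ 2) ≤ D / ((n:ℝ) + 1) := by
            rw [div_le_div_iff₀ (by positivity) (by linarith)]
            rw [hLC]
            nlinarith [mul_le_mul_of_nonneg_right h2CD (sq_nonneg (n:ℝ)),
              mul_nonneg hC0 (by nlinarith : (0:ℝ) ≤ 2 * (n:ℝ)^2 - (n:ℝ) - 1)]
          linarith
  intro n hn
  have hm := main n hn
  have hn0 : (0:ℝ) < (n : ℝ) := by exact_mod_cast hn
  have hKn : (1 + ε) * L * β ^ 2 * M / ((4 * μ * β - 2) * (n:ℝ)) = K / (n:ℝ) := by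
    rw [hKdef, div_div]
  rw [hKn]
  rcases le_total K c with h | h
  · rw [hDdef, max_eq_right h] at hm
    exact hm.trans (le_max_right _ _)
  · rw [hDdef, max_eq_left h] at hm
    exact hm.trans (le_max_left _ _)
end
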